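/- arXiv:1801.00983 — 4 statements merged into one kernel-verified Lean document; each statement's English description precedes it below -/
import Mathlib

section
/- There exists a constant C > 0 with the following property. For every h ∈ (0,1], every real β with 1 ≤ β ≤ h^{-1/2}, every η ∈ ℝ, and every function v : ℝ → ℂ that is continuous on [-2,2] and twice continuously differentiable on (-2,2), if the function g defined on (-2,2) by g(z) = h·β^{-2}·v''(z) + (1 - h²η²)·v(z) is square-integrable on (-2,2), then sup_{z ∈ [-1,1]} ‖v(z)‖ ≤ C·( (∫_{{z : 1 ≤ |z| ≤ 2}} ‖v(z)‖² dz)^{1/2} + h^{-1}·β²·(∫_{-2}^{2} ‖g(z)‖² dz)^{1/2} ). -/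
open MeasureTheory Set


noncomputable section SemiclassicalAux

def psiA (z : ℝ) : ℝ := Real.smoothTransition (7 - 4*z)

def chiA (z : ℝ) : ℝ := psiA z * psiA (-z)

lemma psiA_contDiff : ContDiff ℝ 2 psiA :=
  Real.smoothTransition.contDiff.comp (by fun_prop)

lemma chiA_contDiff : ContDiff ℝ 2 chiA :=
  psiA_contDiff.mul (psiA_contDiff.comp (by fun_prop))

lemma psiA_one {z : ℝ} (hz : z ≤ 3/2) : psiA z = 1 := by
  rw [psiA]; exact Real.smoothTransition.one_of_one_le (by linarith)

lemma psiA_zero {z : ℝ} (hz : 7/4 ≤ z) : psiA z = 0 := by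
  rw [psiA]; exact Real.smoothTransition.zero_of_nonpos (by linarith)

lemma chiA_one {z : ℝ} (hz : |z| ≤ 3/2) : chiA z = 1 := by
  rw [abs_le] at hz
  rw [chiA, psiA_one hz.2, psiA_one (by linarith [hz.1]), mul_one]

lemma chiA_zero {z : ℝ} (hz : 7/4 ≤ |z|) : chiA z = 0 := by
  rcases le_abs.1 hz with h | h
  · rw [chiA, psiA_zero h, zero_mul]
  · rw [chiA]
    rw [psiA_zero (show (7:ℝ)/4 ≤ -z by linarith), mul_zero]

lemma chiA_nonneg (z : ℝ) : 0 ≤ chiA z :=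
  mul_nonneg (Real.smoothTransition.nonneg _) (Real.smoothTransition.nonneg _)

lemma chiA_le_one (z : ℝ) : chiA z ≤ 1 :=
  mul_le_one₀ (Real.smoothTransition.le_one _) (Real.smoothTransition.nonneg _)
    (Real.smoothTransition.le_one _)

lemma chiA_abs_le_one (z : ℝ) : |chiA z| ≤ 1 := by
  rw [abs_of_nonneg (chiA_nonneg z)]; exact chiA_le_one z

/-- first derivative vanishes where χ is locally 1 -/
lemma chiA_deriv_zero {z : ℝ} (hz : |z| < 3/2) : deriv chiA z = 0 := by
  have h : chiA =ᶠ[nhds z] fun _ => (1:ℝ) := by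
    have : ∀ᶠ y in nhds z, |y| < 3/2 :=
      (isOpen_lt continuous_abs continuous_const).eventually_mem (by simpa using hz)
    filter_upwards [this] with y hy using chiA_one hy.le
  rw [h.deriv_eq, deriv_const]

lemma chiA_deriv2_zero {z : ℝ} (hz : |z| < 3/2) : deriv (deriv chiA) z = 0 := by
  have h : deriv chiA =ᶠ[nhds z] fun _ => (0:ℝ) := by
    have : ∀ᶠ y in nhds z, |y| < 3/2 :=
      (isOpen_lt continuous_abs continuous_const).eventually_mem (by simpa using hz)
    filter_upwards [this] with y hy using chiA_deriv_zero hy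
  rw [h.deriv_eq, deriv_const]

lemma chiA_deriv_zero' {z : ℝ} (hz : 7/4 < |z|) : deriv chiA z = 0 := by
  have h : chiA =ᶠ[nhds z] fun _ => (0:ℝ) := by
    have : ∀ᶠ y in nhds z, 7/4 < |y| :=
      (isOpen_lt continuous_const continuous_abs).eventually_mem (by simpa using hz)
    filter_upwards [this] with y hy using chiA_zero hy.le
  rw [h.deriv_eq, deriv_const]

lemma chiA_deriv2_zero' {z : ℝ} (hz : 7/4 < |z|) : deriv (deriv chiA) z = 0 := by
  have h : deriv chiA =ᶠ[nhds z] fun _ => (0:ℝ) := by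
    have : ∀ᶠ y in nhds z, 7/4 < |y| :=
      (isOpen_lt continuous_const continuous_abs).eventually_mem (by simpa using hz)
    filter_upwards [this] with y hy using chiA_deriv_zero' hy
  rw [h.deriv_eq, deriv_const]

end SemiclassicalAux

noncomputable section SemiclassicalAux2

lemma chiA_contDiff_deriv : ContDiff ℝ 1 (deriv chiA) := by
  have h : ContDiff ℝ (1+1) chiA := by exact_mod_cast chiA_contDiff
  exact (contDiff_succ_iff_deriv.1 h).2.2

lemma chiA_hasDerivAt (z : ℝ) : HasDerivAt chiA (deriv chiA z) z :=
  ((chiA_contDiff.differentiable (by norm_num)) z).hasDerivAt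

lemma chiA_deriv_hasDerivAt (z : ℝ) :
    HasDerivAt (deriv chiA) (deriv (deriv chiA) z) z :=
  ((chiA_contDiff_deriv.differentiable (by norm_num)) z).hasDerivAt

lemma chiA_deriv2_continuous : Continuous (deriv (deriv chiA)) := by
  have h : ContDiff ℝ (0+1) (deriv chiA) := by exact_mod_cast chiA_contDiff_deriv
  exact ((contDiff_succ_iff_deriv.1 h).2.2).continuous

/-- a uniform bound for the derivatives of the cutoff -/
lemma chiA_deriv_bound : ∃ M : ℝ, 0 ≤ M ∧
    ∀ z : ℝ, |deriv chiA z| ≤ M ∧ |deriv (deriv chiA) z| ≤ M := by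
  obtain ⟨M₁, hM₁⟩ := (isCompact_Icc (a := (-2:ℝ)) (b := 2)).exists_bound_of_continuousOn
    chiA_contDiff_deriv.continuous.continuousOn
  obtain ⟨M₂, hM₂⟩ := (isCompact_Icc (a := (-2:ℝ)) (b := 2)).exists_bound_of_continuousOn
    chiA_deriv2_continuous.continuousOn
  refine ⟨max (max M₁ M₂) 0, le_max_right _ _, fun z => ?_⟩
  by_cases hz : z ∈ Icc (-2:ℝ) 2
  · constructor
    · exact le_trans (hM₁ z hz) (le_max_of_le_left (le_max_left _ _))
    · exact le_trans (hM₂ z hz) (le_max_of_le_left (le_max_right _ _))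
  · have hz' : 7/4 < |z| := by
      rw [mem_Icc, not_and_or, not_le, not_le] at hz
      rcases hz with h | h
      · rw [abs_of_neg (by linarith)]; linarith
      · rw [abs_of_pos (by linarith)]; linarith
    rw [chiA_deriv_zero' hz', chiA_deriv2_zero' hz']
    simp

end SemiclassicalAux2

noncomputable section SemiclassicalAux3

/-- Cauchy–Schwarz: L¹ bound by L² norm on a set of measure at most 4. -/
lemma l1_le_two_sqrt_l2 {s : Set ℝ} (hs : MeasurableSet s) (hvol : volume s ≤ 4)
    {u : ℝ → ℝ} (hnn : ∀ z, 0 ≤ u z)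
    (hm : AEStronglyMeasurable u (volume.restrict s))
    (hint : IntegrableOn (fun z => u z ^ 2) s) :
    ∫ z in s, u z ≤ 2 * Real.sqrt (∫ z in s, u z ^ 2) := by
  have hfin : IsFiniteMeasure (volume.restrict s) := by
    constructor
    rw [Measure.restrict_apply_univ]
    exact lt_of_le_of_lt hvol (by norm_num)
  have hu2 : MemLp u 2 (volume.restrict s) :=
    (memLp_two_iff_integrable_sq hm).2 hint
  have hone : MemLp (fun _ : ℝ => (1:ℝ)) 2 (volume.restrict s) := memLp_const 1
  have hpq : Real.HolderConjugate 2 2 := Real.HolderConjugate.two_two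
  have h := integral_mul_le_Lp_mul_Lq_of_nonneg hpq
    (Filter.Eventually.of_forall hnn) (Filter.Eventually.of_forall fun _ => zero_le_one)
    (by simpa using hu2) (by simpa using hone)
  have hrp : ∀ x:ℝ, x ^ (2:ℝ) = x ^ (2:ℕ) := fun x => by
    rw [show (2:ℝ) = ((2:ℕ):ℝ) by norm_num, Real.rpow_natCast]
  simp only [mul_one, hrp, one_pow] at h
  have h1 : ∫ (_ : ℝ) in s, (1:ℝ) = (volume s).toReal := by
    simp [Measure.restrict_apply_univ, Measure.real]
  rw [h1] at h
  have h2 : ((volume s).toReal) ^ (1/(2:ℝ)) ≤ 2 := by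
    have hle : (volume s).toReal ≤ 4 := by
      refine ENNReal.toReal_le_of_le_ofReal (by norm_num) (le_trans hvol ?_)
      norm_num
    calc ((volume s).toReal) ^ (1/(2:ℝ)) ≤ (4:ℝ) ^ (1/(2:ℝ)) := by
          exact Real.rpow_le_rpow ENNReal.toReal_nonneg hle (by norm_num)
      _ = 2 := by
          rw [show (4:ℝ) = 2^(2:ℕ) by norm_num, ← Real.rpow_natCast 2 2,
            ← Real.rpow_mul (by norm_num)]
          norm_num
  have h4 : (∫ z in s, u z ^ (2:ℕ)) ^ (1/(2:ℝ)) = Real.sqrt (∫ z in s, u z ^ 2) := by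
    rw [Real.sqrt_eq_rpow]
  calc ∫ z in s, u z ≤ (∫ z in s, u z ^ (2:ℕ)) ^ (1/(2:ℝ)) * ((volume s).toReal) ^ (1/(2:ℝ)) := h
    _ ≤ Real.sqrt (∫ z in s, u z ^ 2) * 2 := by
        rw [h4]
        refine mul_le_mul_of_nonneg_left h2 (Real.sqrt_nonneg _)
    _ = 2 * Real.sqrt (∫ z in s, u z ^ 2) := mul_comm _ _

end SemiclassicalAux3

noncomputable section SemiclassicalAux4

open intervalIntegral in
/-- double integration by parts on an interval -/
lemma ibp2 {v v₁ v₂ w w1 w2 : ℝ → ℂ} {c d : ℝ} (hcd : c ≤ d)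
    (hv : ∀ z ∈ Icc c d, HasDerivAt v (v₁ z) z)
    (hv1 : ∀ z ∈ Icc c d, HasDerivAt v₁ (v₂ z) z)
    (hw : ∀ z, HasDerivAt w (w1 z) z) (hw1 : ∀ z, HasDerivAt w1 (w2 z) z)
    (hcv1 : ContinuousOn v₁ (Icc c d)) (hcv2 : ContinuousOn v₂ (Icc c d))
    (hcw2 : Continuous w2) :
    ∫ x in c..d, v x * w2 x = (∫ x in c..d, v₂ x * w x)
      + (v d * w1 d - v c * w1 c) - (v₁ d * w d - v₁ c * w c) := by
  have huIcc : uIcc c d = Icc c d := uIcc_of_le hcd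
  have hcv : ContinuousOn v (Icc c d) := fun z hz => (hv z hz).continuousAt.continuousWithinAt
  have hcw : Continuous w :=
    continuous_iff_continuousAt.2 fun z => (hw z).differentiableAt.continuousAt
  have hcw1 : Continuous w1 :=
    continuous_iff_continuousAt.2 fun z => (hw1 z).differentiableAt.continuousAt
  have I1 : IntervalIntegrable (fun x => v x * w2 x) volume c d := by
    apply ContinuousOn.intervalIntegrable; rw [huIcc]
    exact hcv.mul hcw2.continuousOn
  have I2 : IntervalIntegrable (fun x => v₂ x * w x) volume c d := by
    apply ContinuousOn.intervalIntegrable; rw [huIcc]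
    exact hcv2.mul hcw.continuousOn
  have I3 : IntervalIntegrable (fun x => v₁ x * w1 x) volume c d := by
    apply ContinuousOn.intervalIntegrable; rw [huIcc]
    exact hcv1.mul hcw1.continuousOn
  have A := integral_deriv_mul_eq_sub (u := v) (v := w1) (u' := v₁) (v' := w2)
    (fun x hx => hv x (huIcc ▸ hx)) (fun x _ => hw1 x)
    (by apply ContinuousOn.intervalIntegrable; rw [huIcc]; exact hcv1)
    (hcw2.intervalIntegrable c d)
  have B := integral_deriv_mul_eq_sub (u := v₁) (v := w) (u' := v₂) (v' := w1)
    (fun x hx => hv1 x (huIcc ▸ hx)) (fun x _ => hw x)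
    (by apply ContinuousOn.intervalIntegrable; rw [huIcc]; exact hcv2)
    (hcw1.intervalIntegrable c d)
  have EA : ∫ x in c..d, (v₁ x * w1 x + v x * w2 x)
      = (∫ x in c..d, v₁ x * w1 x) + ∫ x in c..d, v x * w2 x :=
    integral_add I3 I1
  have EB : ∫ x in c..d, (v₂ x * w x + v₁ x * w1 x)
      = (∫ x in c..d, v₂ x * w x) + ∫ x in c..d, v₁ x * w1 x :=
    integral_add I2 I3
  linear_combination A - B - EA + EB

end SemiclassicalAux4

noncomputable section SemiclassicalKey

set_option maxHeartbeats 2000000 in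
lemma key_estimate (μ : ℝ) (v f : ℝ → ℂ) (z₀ : ℝ) (hz₀ : z₀ ∈ Icc (-1:ℝ) 1)
    (hvc : ContinuousOn v (Icc (-2:ℝ) 2))
    (hv : ContDiffOn ℝ 2 v (Ioo (-2:ℝ) 2))
    (hODE : ∀ z ∈ Ioo (-2:ℝ) 2, deriv (deriv v) z = f z - (μ:ℂ) * v z)
    {S S1 S2 : ℝ → ℝ}
    (hS1 : ∀ r, HasDerivAt S (S1 r) r)
    (hS2 : ∀ r, HasDerivAt S1 (S2 r) r)
    (hSODE : ∀ r, S2 r = -μ * S r)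
    (hS10 : S1 0 = 1/2)
    (hSb : ∀ r ∈ Icc (0:ℝ) 3, |S r| ≤ 31 ∧ |S1 r| ≤ 11)
    {M : ℝ} (hM0 : 0 ≤ M)
    (hM : ∀ z, |deriv chiA z| ≤ M ∧ |deriv (deriv chiA) z| ≤ M) :
    ‖v z₀‖ ≤ (212 * M) * Real.sqrt (∫ z in {z : ℝ | 1 ≤ |z| ∧ |z| ≤ 2}, ‖v z‖ ^ 2)
      + 62 * ∫ z in Ioc (-(9:ℝ)/5) ((9:ℝ)/5), ‖f z‖ := by
  obtain ⟨hz₀1, hz₀2⟩ := hz₀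
  -- basic facts about v and its derivatives
  set v₁ := deriv v with hv₁def
  set v₂ := deriv (deriv v) with hv₂def
  have hIoo : IsOpen (Ioo (-2:ℝ) 2) := isOpen_Ioo
  have hvd : ∀ z ∈ Ioo (-2:ℝ) 2, HasDerivAt v (v₁ z) z := by
    intro z hz
    exact ((hv.differentiableOn (by norm_num)).differentiableAt
      (hIoo.mem_nhds hz)).hasDerivAt
  have hv1cd : ContDiffOn ℝ 1 v₁ (Ioo (-2:ℝ) 2) :=
    hv.deriv_of_isOpen hIoo (by norm_num)
  have hv1d : ∀ z ∈ Ioo (-2:ℝ) 2, HasDerivAt v₁ (v₂ z) z := by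
    intro z hz
    exact ((hv1cd.differentiableOn (by norm_num)).differentiableAt
      (hIoo.mem_nhds hz)).hasDerivAt
  have hv1c : ContinuousOn v₁ (Ioo (-2:ℝ) 2) := hv1cd.continuousOn
  have hv2c : ContinuousOn v₂ (Ioo (-2:ℝ) 2) :=
    hv1cd.continuousOn_deriv_of_isOpen hIoo (by norm_num)
  have hsubab : Icc (-(9:ℝ)/5) ((9:ℝ)/5) ⊆ Ioo (-2:ℝ) 2 := by
    intro z hz; obtain ⟨h1, h2⟩ := hz; constructor <;> [linarith; linarith]
  -- continuity of f on [a,b]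
  have hfeq : ∀ z ∈ Ioo (-2:ℝ) 2, f z = v₂ z + (μ:ℂ) * v z := by
    intro z hz; linear_combination -(hODE z hz)
  have hfc : ContinuousOn f (Icc (-(9:ℝ)/5) ((9:ℝ)/5)) := by
    refine ContinuousOn.congr (f := fun z => v₂ z + (μ:ℂ) * v z) ((hv2c.mono hsubab).add
      (((continuousOn_const (c := (μ:ℂ))).mul (hv.continuousOn.mono hsubab)))) ?_
    intro z hz; exact hfeq z (hsubab hz)
  -- continuity of S, S1, S2
  have hScont : Continuous S :=
    continuous_iff_continuousAt.2 fun z => (hS1 z).differentiableAt.continuousAt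
  have hS1cont : Continuous S1 :=
    continuous_iff_continuousAt.2 fun z => (hS2 z).differentiableAt.continuousAt
  have hS2cont : Continuous S2 := by
    have : S2 = fun r => -μ * S r := funext hSODE
    rw [this]; exact continuous_const.mul hScont
  -- kernel shifted derivative facts
  have hpS : ∀ z : ℝ, HasDerivAt (fun y => S (y - z₀)) (S1 (z - z₀)) z := by
    intro z
    simpa [Function.comp_def] using (hS1 (z - z₀)).comp z ((hasDerivAt_id z).sub_const z₀)
  have hpS1 : ∀ z : ℝ, HasDerivAt (fun y => S1 (y - z₀)) (S2 (z - z₀)) z := by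
    intro z
    simpa [Function.comp_def] using (hS2 (z - z₀)).comp z ((hasDerivAt_id z).sub_const z₀)
  have hmS : ∀ z : ℝ, HasDerivAt (fun y => S (z₀ - y)) (-S1 (z₀ - z)) z := by
    intro z
    simpa [Function.comp_def] using (hS1 (z₀ - z)).comp z ((hasDerivAt_id z).const_sub z₀)
  have hmS1 : ∀ z : ℝ, HasDerivAt (fun y => -S1 (z₀ - y)) (S2 (z₀ - z)) z := by
    intro z
    have := ((hS2 (z₀ - z)).comp z ((hasDerivAt_id z).const_sub z₀)).neg
    simpa [Function.comp_def, Pi.neg_def] using this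
  -- the cutoff-kernel products (complexified)
  set Wp : ℝ → ℂ := fun z => ((chiA z * S (z - z₀) : ℝ) : ℂ) with hWpdef
  set Wp1 : ℝ → ℂ :=
    fun z => ((deriv chiA z * S (z - z₀) + chiA z * S1 (z - z₀) : ℝ) : ℂ) with hWp1def
  set Wp2 : ℝ → ℂ := fun z =>
    (((deriv (deriv chiA) z * S (z - z₀) + deriv chiA z * S1 (z - z₀))
      + (deriv chiA z * S1 (z - z₀) + chiA z * S2 (z - z₀)) : ℝ) : ℂ) with hWp2def
  set Wm : ℝ → ℂ := fun z => ((chiA z * S (z₀ - z) : ℝ) : ℂ) with hWmdef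
  set Wm1 : ℝ → ℂ :=
    fun z => ((deriv chiA z * S (z₀ - z) + chiA z * -S1 (z₀ - z) : ℝ) : ℂ) with hWm1def
  set Wm2 : ℝ → ℂ := fun z =>
    (((deriv (deriv chiA) z * S (z₀ - z) + deriv chiA z * -S1 (z₀ - z))
      + (deriv chiA z * -S1 (z₀ - z) + chiA z * S2 (z₀ - z)) : ℝ) : ℂ) with hWm2def
  have hWpd : ∀ z, HasDerivAt Wp (Wp1 z) z := fun z =>
    (((chiA_hasDerivAt z).mul (hpS z))).ofReal_comp
  have hWp1d : ∀ z, HasDerivAt Wp1 (Wp2 z) z := fun z =>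
    ((((chiA_deriv_hasDerivAt z).mul (hpS z)).add
      ((chiA_hasDerivAt z).mul (hpS1 z)))).ofReal_comp
  have hWmd : ∀ z, HasDerivAt Wm (Wm1 z) z := fun z =>
    (((chiA_hasDerivAt z).mul (hmS z))).ofReal_comp
  have hWm1d : ∀ z, HasDerivAt Wm1 (Wm2 z) z := fun z =>
    ((((chiA_deriv_hasDerivAt z).mul (hmS z)).add
      ((chiA_hasDerivAt z).mul (hmS1 z)))).ofReal_comp
  have hc0 : Continuous chiA := chiA_contDiff.continuous
  have hc1 : Continuous (deriv chiA) := chiA_contDiff_deriv.continuous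
  have hc2 : Continuous (deriv (deriv chiA)) := chiA_deriv2_continuous
  have hWp2c : Continuous Wp2 := by
    apply Complex.continuous_ofReal.comp
    exact ((hc2.mul (hScont.comp (continuous_id.sub continuous_const))).add
        (hc1.mul (hS1cont.comp (continuous_id.sub continuous_const)))).add
      ((hc1.mul (hS1cont.comp (continuous_id.sub continuous_const))).add
        (hc0.mul (hS2cont.comp (continuous_id.sub continuous_const))))
  have hWm2c : Continuous Wm2 := by
    apply Complex.continuous_ofReal.comp
    exact ((hc2.mul (hScont.comp (continuous_const.sub continuous_id))).add
        (hc1.mul ((hS1cont.comp (continuous_const.sub continuous_id)).neg))).add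
      ((hc1.mul ((hS1cont.comp (continuous_const.sub continuous_id)).neg)).add
        (hc0.mul (hS2cont.comp (continuous_const.sub continuous_id))))
  -- boundary values
  have hχz₀ : chiA z₀ = 1 := chiA_one (abs_le.2 ⟨by linarith, by linarith⟩)
  have hχ'z₀ : deriv chiA z₀ = 0 := chiA_deriv_zero (abs_lt.2 ⟨by linarith, by linarith⟩)
  have hχb : chiA ((9:ℝ)/5) = 0 := chiA_zero (by rw [abs_of_pos] <;> norm_num)
  have hχ'b : deriv chiA ((9:ℝ)/5) = 0 := chiA_deriv_zero' (by rw [abs_of_pos] <;> norm_num)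
  have hχa : chiA (-(9:ℝ)/5) = 0 := chiA_zero (by rw [abs_of_neg] <;> norm_num)
  have hχ'a : deriv chiA (-(9:ℝ)/5) = 0 := chiA_deriv_zero' (by rw [abs_of_neg] <;> norm_num)
  have hWpb1 : Wp1 ((9:ℝ)/5) = 0 := by simp [hWp1def, hχb, hχ'b]
  have hWpb : Wp ((9:ℝ)/5) = 0 := by simp [hWpdef, hχb]
  have hWpz₀ : Wp z₀ = ((S 0 : ℝ) : ℂ) := by simp [hWpdef, hχz₀]
  have hWp1z₀ : Wp1 z₀ = ((1:ℂ)/2) := by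
    simp [hWp1def, hχz₀, hχ'z₀, hS10]
  have hWma1 : Wm1 (-(9:ℝ)/5) = 0 := by simp [hWm1def, hχa, hχ'a]
  have hWma : Wm (-(9:ℝ)/5) = 0 := by simp [hWmdef, hχa]
  have hWmz₀ : Wm z₀ = ((S 0 : ℝ) : ℂ) := by simp [hWmdef, hχz₀]
  have hWm1z₀ : Wm1 z₀ = -((1:ℂ)/2) := by
    simp [hWm1def, hχz₀, hχ'z₀, hS10]
  -- interval inclusions
  have hsubp : Icc z₀ ((9:ℝ)/5) ⊆ Icc (-(9:ℝ)/5) ((9:ℝ)/5) :=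
    Icc_subset_Icc (by linarith) le_rfl
  have hsubm : Icc (-(9:ℝ)/5) z₀ ⊆ Icc (-(9:ℝ)/5) ((9:ℝ)/5) :=
    Icc_subset_Icc le_rfl (by linarith)
  -- the two integrations by parts
  have hIp := ibp2 (v := v) (v₁ := v₁) (v₂ := v₂) (w := Wp) (w1 := Wp1) (w2 := Wp2)
    (c := z₀) (d := (9:ℝ)/5) (by linarith)
    (fun z hz => hvd z (hsubab (hsubp hz))) (fun z hz => hv1d z (hsubab (hsubp hz)))
    hWpd hWp1d (hv1c.mono fun z hz => hsubab (hsubp hz))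
    (hv2c.mono fun z hz => hsubab (hsubp hz)) hWp2c
  have hIm := ibp2 (v := v) (v₁ := v₁) (v₂ := v₂) (w := Wm) (w1 := Wm1) (w2 := Wm2)
    (c := -(9:ℝ)/5) (d := z₀) (by linarith)
    (fun z hz => hvd z (hsubab (hsubm hz))) (fun z hz => hv1d z (hsubab (hsubm hz)))
    hWmd hWm1d (hv1c.mono fun z hz => hsubab (hsubm hz))
    (hv2c.mono fun z hz => hsubab (hsubm hz)) hWm2c
  rw [hWpb1, hWpb, hWpz₀, hWp1z₀] at hIp
  rw [hWma1, hWma, hWmz₀, hWm1z₀] at hIm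
  -- the error terms
  set P : ℝ → ℂ := fun z =>
    ((deriv (deriv chiA) z * S (z - z₀) + 2 * (deriv chiA z * S1 (z - z₀)) : ℝ) : ℂ) with hPdef
  set Q : ℝ → ℂ := fun z =>
    ((deriv (deriv chiA) z * S (z₀ - z) - 2 * (deriv chiA z * S1 (z₀ - z)) : ℝ) : ℂ) with hQdef
  have hWpc : Continuous Wp := Complex.continuous_ofReal.comp
    (hc0.mul (hScont.comp (continuous_id.sub continuous_const)))
  have hWmc : Continuous Wm := Complex.continuous_ofReal.comp
    (hc0.mul (hScont.comp (continuous_const.sub continuous_id)))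
  have hPc : Continuous P := Complex.continuous_ofReal.comp
    ((hc2.mul (hScont.comp (continuous_id.sub continuous_const))).add
      (continuous_const.mul (hc1.mul (hS1cont.comp (continuous_id.sub continuous_const)))))
  have hQc : Continuous Q := Complex.continuous_ofReal.comp
    ((hc2.mul (hScont.comp (continuous_const.sub continuous_id))).sub
      (continuous_const.mul (hc1.mul (hS1cont.comp (continuous_const.sub continuous_id)))))
  have hvcontIoo : ContinuousOn v (Ioo (-2:ℝ) 2) := hv.continuousOn
  have huIccp : uIcc z₀ ((9:ℝ)/5) = Icc z₀ ((9:ℝ)/5) := uIcc_of_le (by linarith)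
  have huIccm : uIcc (-(9:ℝ)/5) z₀ = Icc (-(9:ℝ)/5) z₀ := uIcc_of_le (by linarith)
  have hvIccp : ContinuousOn v (Icc z₀ ((9:ℝ)/5)) :=
    hvcontIoo.mono fun z hz => hsubab (hsubp hz)
  have hvIccm : ContinuousOn v (Icc (-(9:ℝ)/5) z₀) :=
    hvcontIoo.mono fun z hz => hsubab (hsubm hz)
  have IvPp : IntervalIntegrable (fun x => v x * P x) volume z₀ ((9:ℝ)/5) := by
    apply ContinuousOn.intervalIntegrable; rw [huIccp]
    exact hvIccp.mul hPc.continuousOn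
  have IvQm : IntervalIntegrable (fun x => v x * Q x) volume (-(9:ℝ)/5) z₀ := by
    apply ContinuousOn.intervalIntegrable; rw [huIccm]
    exact hvIccm.mul hQc.continuousOn
  have IvWp : IntervalIntegrable (fun x => v x * Wp x) volume z₀ ((9:ℝ)/5) := by
    apply ContinuousOn.intervalIntegrable; rw [huIccp]
    exact hvIccp.mul hWpc.continuousOn
  have IvWm : IntervalIntegrable (fun x => v x * Wm x) volume (-(9:ℝ)/5) z₀ := by
    apply ContinuousOn.intervalIntegrable; rw [huIccm]
    exact hvIccm.mul hWmc.continuousOn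
  have IfWp : IntervalIntegrable (fun x => f x * Wp x) volume z₀ ((9:ℝ)/5) := by
    apply ContinuousOn.intervalIntegrable; rw [huIccp]
    exact (hfc.mono hsubp).mul hWpc.continuousOn
  have IfWm : IntervalIntegrable (fun x => f x * Wm x) volume (-(9:ℝ)/5) z₀ := by
    apply ContinuousOn.intervalIntegrable; rw [huIccm]
    exact (hfc.mono hsubm).mul hWmc.continuousOn
  -- rewrite the second derivative of the weight using the kernel ODE
  have hEp : ∫ x in z₀..((9:ℝ)/5), v x * Wp2 x
      = (∫ x in z₀..((9:ℝ)/5), v x * P x) - (μ:ℂ) * ∫ x in z₀..((9:ℝ)/5), v x * Wp x := by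
    have heq : EqOn (fun x => v x * Wp2 x)
        (fun x => v x * P x - (μ:ℂ) * (v x * Wp x)) (uIcc z₀ ((9:ℝ)/5)) := by
      intro x _
      have hs2 := congrArg (Complex.ofReal) (hSODE (x - z₀))
      push_cast at hs2
      simp only [hWp2def, hPdef, hWpdef]
      push_cast
      linear_combination (v x) * (chiA x : ℂ) * hs2
    rw [intervalIntegral.integral_congr heq,
      intervalIntegral.integral_sub IvPp (IvWp.const_mul _),
      intervalIntegral.integral_const_mul]
  have hEm : ∫ x in (-(9:ℝ)/5)..z₀, v x * Wm2 x
      = (∫ x in (-(9:ℝ)/5)..z₀, v x * Q x) - (μ:ℂ) * ∫ x in (-(9:ℝ)/5)..z₀, v x * Wm x := by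
    have heq : EqOn (fun x => v x * Wm2 x)
        (fun x => v x * Q x - (μ:ℂ) * (v x * Wm x)) (uIcc (-(9:ℝ)/5) z₀) := by
      intro x _
      have hs2 := congrArg (Complex.ofReal) (hSODE (z₀ - x))
      push_cast at hs2
      simp only [hWm2def, hQdef, hWmdef]
      push_cast
      linear_combination (v x) * (chiA x : ℂ) * hs2
    rw [intervalIntegral.integral_congr heq,
      intervalIntegral.integral_sub IvQm (IvWm.const_mul _),
      intervalIntegral.integral_const_mul]
  -- rewrite v'' using the ODE
  have hFp : ∫ x in z₀..((9:ℝ)/5), v₂ x * Wp x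
      = (∫ x in z₀..((9:ℝ)/5), f x * Wp x) - (μ:ℂ) * ∫ x in z₀..((9:ℝ)/5), v x * Wp x := by
    have heq : EqOn (fun x => v₂ x * Wp x)
        (fun x => f x * Wp x - (μ:ℂ) * (v x * Wp x)) (uIcc z₀ ((9:ℝ)/5)) := by
      intro x hx
      rw [huIccp] at hx
      linear_combination (Wp x) * (hODE x (hsubab (hsubp hx)))
    rw [intervalIntegral.integral_congr heq,
      intervalIntegral.integral_sub IfWp (IvWp.const_mul _),
      intervalIntegral.integral_const_mul]
  have hFm : ∫ x in (-(9:ℝ)/5)..z₀, v₂ x * Wm x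
      = (∫ x in (-(9:ℝ)/5)..z₀, f x * Wm x) - (μ:ℂ) * ∫ x in (-(9:ℝ)/5)..z₀, v x * Wm x := by
    have heq : EqOn (fun x => v₂ x * Wm x)
        (fun x => f x * Wm x - (μ:ℂ) * (v x * Wm x)) (uIcc (-(9:ℝ)/5) z₀) := by
      intro x hx
      rw [huIccm] at hx
      linear_combination (Wm x) * (hODE x (hsubab (hsubm hx)))
    rw [intervalIntegral.integral_congr heq,
      intervalIntegral.integral_sub IfWm (IvWm.const_mul _),
      intervalIntegral.integral_const_mul]
  -- the representation formula
  have hrep : v z₀ = ((∫ x in (-(9:ℝ)/5)..z₀, f x * Wm x) + ∫ x in z₀..((9:ℝ)/5), f x * Wp x)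
      - ((∫ x in (-(9:ℝ)/5)..z₀, v x * Q x) + ∫ x in z₀..((9:ℝ)/5), v x * P x) := by
    linear_combination hIp + hIm - hEp - hEm + hFp + hFm
  -- the outer set
  have hOsub : {z : ℝ | 1 ≤ |z| ∧ |z| ≤ 2} ⊆ Icc (-2:ℝ) 2 := by
    intro z hz; exact abs_le.1 hz.2
  have hOclosed : IsClosed {z : ℝ | 1 ≤ |z| ∧ |z| ≤ 2} :=
    (isClosed_le continuous_const continuous_abs).inter
      (isClosed_le continuous_abs continuous_const)
  have hOcompact : IsCompact {z : ℝ | 1 ≤ |z| ∧ |z| ≤ 2} :=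
    isCompact_Icc.of_isClosed_subset hOclosed hOsub
  have hOint : IntegrableOn (fun z => ‖v z‖ ^ 2) {z : ℝ | 1 ≤ |z| ∧ |z| ≤ 2} :=
    (((hvc.mono hOsub).norm).pow 2).integrableOn_compact hOcompact
  -- f L¹ bound facts
  have hfint : IntegrableOn (fun z => ‖f z‖) (Ioc (-(9:ℝ)/5) ((9:ℝ)/5)) :=
    (hfc.norm.integrableOn_compact isCompact_Icc).mono_set Ioc_subset_Icc_self
  have hfnn : 0 ≤ᵐ[volume.restrict (Ioc (-(9:ℝ)/5) ((9:ℝ)/5))] fun z => ‖f z‖ :=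
    Filter.Eventually.of_forall fun z => norm_nonneg _
  -- bound for the f-terms
  have hNfp : ‖∫ x in z₀..((9:ℝ)/5), f x * Wp x‖
      ≤ 31 * ∫ z in Ioc (-(9:ℝ)/5) ((9:ℝ)/5), ‖f z‖ := by
    calc ‖∫ x in z₀..((9:ℝ)/5), f x * Wp x‖
        ≤ ∫ x in z₀..((9:ℝ)/5), ‖f x * Wp x‖ :=
          intervalIntegral.norm_integral_le_integral_norm (by linarith)
      _ ≤ ∫ x in z₀..((9:ℝ)/5), 31 * ‖f x‖ := by
          apply intervalIntegral.integral_mono_on (by linarith)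
          · apply ContinuousOn.intervalIntegrable; rw [huIccp]
            exact ((hfc.mono hsubp).mul hWpc.continuousOn).norm
          · apply ContinuousOn.intervalIntegrable; rw [huIccp]
            exact (continuousOn_const.mul (hfc.mono hsubp).norm)
          · intro x hx
            rw [norm_mul, mul_comm]
            apply mul_le_mul_of_nonneg_right _ (norm_nonneg _)
            rw [hWpdef]
            simp only [Complex.norm_real, Real.norm_eq_abs, abs_mul]
            calc |chiA x| * |S (x - z₀)| ≤ 1 * 31 := by
                  apply mul_le_mul (chiA_abs_le_one x) _ (abs_nonneg _) zero_le_one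
                  exact (hSb (x - z₀) ⟨by linarith [hx.1], by linarith [hx.2]⟩).1
              _ = 31 := one_mul _
      _ = 31 * ∫ x in z₀..((9:ℝ)/5), ‖f x‖ := intervalIntegral.integral_const_mul _ _
      _ ≤ 31 * ∫ z in Ioc (-(9:ℝ)/5) ((9:ℝ)/5), ‖f z‖ := by
          apply mul_le_mul_of_nonneg_left _ (by norm_num)
          rw [intervalIntegral.integral_of_le (by linarith)]
          exact setIntegral_mono_set hfint hfnn
            (HasSubset.Subset.eventuallyLE (Ioc_subset_Ioc (by linarith) le_rfl))
  have hNfm : ‖∫ x in (-(9:ℝ)/5)..z₀, f x * Wm x‖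
      ≤ 31 * ∫ z in Ioc (-(9:ℝ)/5) ((9:ℝ)/5), ‖f z‖ := by
    calc ‖∫ x in (-(9:ℝ)/5)..z₀, f x * Wm x‖
        ≤ ∫ x in (-(9:ℝ)/5)..z₀, ‖f x * Wm x‖ :=
          intervalIntegral.norm_integral_le_integral_norm (by linarith)
      _ ≤ ∫ x in (-(9:ℝ)/5)..z₀, 31 * ‖f x‖ := by
          apply intervalIntegral.integral_mono_on (by linarith)
          · apply ContinuousOn.intervalIntegrable; rw [huIccm]
            exact ((hfc.mono hsubm).mul hWmc.continuousOn).norm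
          · apply ContinuousOn.intervalIntegrable; rw [huIccm]
            exact (continuousOn_const.mul (hfc.mono hsubm).norm)
          · intro x hx
            rw [norm_mul, mul_comm]
            apply mul_le_mul_of_nonneg_right _ (norm_nonneg _)
            rw [hWmdef]
            simp only [Complex.norm_real, Real.norm_eq_abs, abs_mul]
            calc |chiA x| * |S (z₀ - x)| ≤ 1 * 31 := by
                  apply mul_le_mul (chiA_abs_le_one x) _ (abs_nonneg _) zero_le_one
                  exact (hSb (z₀ - x) ⟨by linarith [hx.2], by linarith [hx.1]⟩).1
              _ = 31 := one_mul _
      _ = 31 * ∫ x in (-(9:ℝ)/5)..z₀, ‖f x‖ := intervalIntegral.integral_const_mul _ _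
      _ ≤ 31 * ∫ z in Ioc (-(9:ℝ)/5) ((9:ℝ)/5), ‖f z‖ := by
          apply mul_le_mul_of_nonneg_left _ (by norm_num)
          rw [intervalIntegral.integral_of_le (by linarith)]
          exact setIntegral_mono_set hfint hfnn
            (HasSubset.Subset.eventuallyLE (Ioc_subset_Ioc le_rfl (by linarith)))
  -- bounds for the error terms
  have hvIcc79 : ContinuousOn v (Icc ((7:ℝ)/5) ((9:ℝ)/5)) :=
    hvc.mono (Icc_subset_Icc (by norm_num) (by norm_num))
  have hvIcc97 : ContinuousOn v (Icc (-(9:ℝ)/5) (-(7:ℝ)/5)) :=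
    hvc.mono (Icc_subset_Icc (by norm_num) (by norm_num))
  have IvP1 : IntervalIntegrable (fun x => v x * P x) volume z₀ ((7:ℝ)/5) := by
    apply ContinuousOn.intervalIntegrable; rw [uIcc_of_le (by linarith)]
    exact (hvIccp.mono (Icc_subset_Icc le_rfl (by norm_num))).mul hPc.continuousOn
  have IvP2 : IntervalIntegrable (fun x => v x * P x) volume ((7:ℝ)/5) ((9:ℝ)/5) := by
    apply ContinuousOn.intervalIntegrable; rw [uIcc_of_le (by norm_num)]
    exact hvIcc79.mul hPc.continuousOn
  have IvQ1 : IntervalIntegrable (fun x => v x * Q x) volume (-(9:ℝ)/5) (-(7:ℝ)/5) := by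
    apply ContinuousOn.intervalIntegrable; rw [uIcc_of_le (by norm_num)]
    exact hvIcc97.mul hQc.continuousOn
  have IvQ2 : IntervalIntegrable (fun x => v x * Q x) volume (-(7:ℝ)/5) z₀ := by
    apply ContinuousOn.intervalIntegrable; rw [uIcc_of_le (by linarith)]
    exact (hvIccm.mono (Icc_subset_Icc (by norm_num) le_rfl)).mul hQc.continuousOn
  have hsplitP : ∫ x in z₀..((9:ℝ)/5), v x * P x
      = (∫ x in z₀..((7:ℝ)/5), v x * P x) + ∫ x in ((7:ℝ)/5)..((9:ℝ)/5), v x * P x :=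
    (intervalIntegral.integral_add_adjacent_intervals IvP1 IvP2).symm
  have hsplitQ : ∫ x in (-(9:ℝ)/5)..z₀, v x * Q x
      = (∫ x in (-(9:ℝ)/5)..(-(7:ℝ)/5), v x * Q x) + ∫ x in (-(7:ℝ)/5)..z₀, v x * Q x :=
    (intervalIntegral.integral_add_adjacent_intervals IvQ1 IvQ2).symm
  have hzeroP : ∫ x in z₀..((7:ℝ)/5), v x * P x = 0 := by
    rw [intervalIntegral.integral_congr (g := fun _ => (0:ℂ))]
    · exact intervalIntegral.integral_zero
    · intro x hx
      rw [uIcc_of_le (by linarith)] at hx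
      have hxa : |x| < 3/2 := abs_lt.2 ⟨by linarith [hx.1], by linarith [hx.2]⟩
      simp [hPdef, chiA_deriv_zero hxa, chiA_deriv2_zero hxa]
  have hzeroQ : ∫ x in (-(7:ℝ)/5)..z₀, v x * Q x = 0 := by
    rw [intervalIntegral.integral_congr (g := fun _ => (0:ℂ))]
    · exact intervalIntegral.integral_zero
    · intro x hx
      rw [uIcc_of_le (by linarith)] at hx
      have hxa : |x| < 3/2 := abs_lt.2 ⟨by linarith [hx.1], by linarith [hx.2]⟩
      simp [hQdef, chiA_deriv_zero hxa, chiA_deriv2_zero hxa]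
  -- pointwise bound for P and Q on the outer intervals
  have hPbd : ∀ x ∈ Icc ((7:ℝ)/5) ((9:ℝ)/5), ‖P x‖ ≤ 53 * M := by
    intro x hx
    have h1 : x - z₀ ∈ Icc (0:ℝ) 3 := ⟨by linarith [hx.1], by linarith [hx.2]⟩
    rw [hPdef]
    simp only [Complex.norm_real, Real.norm_eq_abs]
    calc |deriv (deriv chiA) x * S (x - z₀) + 2 * (deriv chiA x * S1 (x - z₀))|
        ≤ |deriv (deriv chiA) x * S (x - z₀)| + |2 * (deriv chiA x * S1 (x - z₀))| :=
          abs_add_le _ _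
      _ ≤ M * 31 + 2 * (M * 11) := by
          rw [abs_mul, abs_mul, abs_mul]
          have := hSb (x - z₀) h1
          have h2 := hM x
          rw [abs_two]
          refine add_le_add (mul_le_mul h2.2 this.1 (abs_nonneg _) hM0) ?_
          exact mul_le_mul_of_nonneg_left
            (mul_le_mul h2.1 this.2 (abs_nonneg _) hM0) (by norm_num)
      _ = 53 * M := by ring
  have hQbd : ∀ x ∈ Icc (-(9:ℝ)/5) (-(7:ℝ)/5), ‖Q x‖ ≤ 53 * M := by
    intro x hx
    have h1 : z₀ - x ∈ Icc (0:ℝ) 3 := ⟨by linarith [hx.2], by linarith [hx.1]⟩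
    rw [hQdef]
    simp only [Complex.norm_real, Real.norm_eq_abs]
    calc |deriv (deriv chiA) x * S (z₀ - x) - 2 * (deriv chiA x * S1 (z₀ - x))|
        ≤ |deriv (deriv chiA) x * S (z₀ - x)| + |2 * (deriv chiA x * S1 (z₀ - x))| :=
          abs_sub _ _
      _ ≤ M * 31 + 2 * (M * 11) := by
          rw [abs_mul, abs_mul, abs_mul]
          have := hSb (z₀ - x) h1
          have h2 := hM x
          rw [abs_two]
          refine add_le_add (mul_le_mul h2.2 this.1 (abs_nonneg _) hM0) ?_
          exact mul_le_mul_of_nonneg_left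
            (mul_le_mul h2.1 this.2 (abs_nonneg _) hM0) (by norm_num)
      _ = 53 * M := by ring
  -- L¹–L² step on the outer intervals
  have sqrtOuter := Real.sqrt_nonneg (∫ z in {z : ℝ | 1 ≤ |z| ∧ |z| ≤ 2}, ‖v z‖ ^ 2)
  have hvnn2 : 0 ≤ᵐ[volume.restrict ({z : ℝ | 1 ≤ |z| ∧ |z| ≤ 2})] fun z => ‖v z‖ ^ 2 :=
    Filter.Eventually.of_forall fun z => pow_nonneg (norm_nonneg _) 2
  have hPterm : ‖∫ x in z₀..((9:ℝ)/5), v x * P x‖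
      ≤ 106 * M * Real.sqrt (∫ z in {z : ℝ | 1 ≤ |z| ∧ |z| ≤ 2}, ‖v z‖ ^ 2) := by
    rw [hsplitP, hzeroP, zero_add]
    have hsubO : Ioc ((7:ℝ)/5) ((9:ℝ)/5) ⊆ {z : ℝ | 1 ≤ |z| ∧ |z| ≤ 2} := by
      intro z hz
      simp only [mem_setOf_eq]
      rw [abs_of_pos (by linarith [hz.1])]
      exact ⟨by linarith [hz.1], by linarith [hz.2]⟩
    have hCS : ∫ z in Ioc ((7:ℝ)/5) ((9:ℝ)/5), ‖v z‖
        ≤ 2 * Real.sqrt (∫ z in Ioc ((7:ℝ)/5) ((9:ℝ)/5), ‖v z‖ ^ 2) := by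
      apply l1_le_two_sqrt_l2 measurableSet_Ioc
      · rw [Real.volume_Ioc]
        rw [show (4:ENNReal) = ENNReal.ofReal 4 by norm_num]
        exact ENNReal.ofReal_le_ofReal (by norm_num)
      · exact fun z => norm_nonneg _
      · exact ((hvIcc79.norm).mono Ioc_subset_Icc_self).aestronglyMeasurable measurableSet_Ioc
      · exact ((hvIcc79.norm.pow 2).integrableOn_compact isCompact_Icc).mono_set
          Ioc_subset_Icc_self
    have hmono : ∫ z in Ioc ((7:ℝ)/5) ((9:ℝ)/5), ‖v z‖ ^ 2
        ≤ ∫ z in {z : ℝ | 1 ≤ |z| ∧ |z| ≤ 2}, ‖v z‖ ^ 2 :=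
      setIntegral_mono_set hOint hvnn2 (HasSubset.Subset.eventuallyLE hsubO)
    calc ‖∫ x in ((7:ℝ)/5)..((9:ℝ)/5), v x * P x‖
        ≤ ∫ x in ((7:ℝ)/5)..((9:ℝ)/5), ‖v x * P x‖ :=
          intervalIntegral.norm_integral_le_integral_norm (by norm_num)
      _ ≤ ∫ x in ((7:ℝ)/5)..((9:ℝ)/5), (53 * M) * ‖v x‖ := by
          apply intervalIntegral.integral_mono_on (by norm_num)
          · apply ContinuousOn.intervalIntegrable; rw [uIcc_of_le (by norm_num)]
            exact (hvIcc79.mul hPc.continuousOn).norm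
          · apply ContinuousOn.intervalIntegrable; rw [uIcc_of_le (by norm_num)]
            exact continuousOn_const.mul hvIcc79.norm
          · intro x hx
            rw [norm_mul, mul_comm]
            exact mul_le_mul_of_nonneg_right (hPbd x hx) (norm_nonneg _)
      _ = (53 * M) * ∫ x in ((7:ℝ)/5)..((9:ℝ)/5), ‖v x‖ :=
          intervalIntegral.integral_const_mul _ _
      _ = (53 * M) * ∫ z in Ioc ((7:ℝ)/5) ((9:ℝ)/5), ‖v z‖ := by
          rw [intervalIntegral.integral_of_le (by norm_num)]
      _ ≤ (53 * M) * (2 * Real.sqrt (∫ z in Ioc ((7:ℝ)/5) ((9:ℝ)/5), ‖v z‖ ^ 2)) :=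
          mul_le_mul_of_nonneg_left hCS (by positivity)
      _ ≤ (53 * M) * (2 * Real.sqrt (∫ z in {z : ℝ | 1 ≤ |z| ∧ |z| ≤ 2}, ‖v z‖ ^ 2)) := by
          apply mul_le_mul_of_nonneg_left _ (by positivity)
          exact mul_le_mul_of_nonneg_left (Real.sqrt_le_sqrt hmono) (by norm_num)
      _ = 106 * M * Real.sqrt (∫ z in {z : ℝ | 1 ≤ |z| ∧ |z| ≤ 2}, ‖v z‖ ^ 2) := by ring
  have hQterm : ‖∫ x in (-(9:ℝ)/5)..z₀, v x * Q x‖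
      ≤ 106 * M * Real.sqrt (∫ z in {z : ℝ | 1 ≤ |z| ∧ |z| ≤ 2}, ‖v z‖ ^ 2) := by
    rw [hsplitQ, hzeroQ, add_zero]
    have hsubO : Ioc (-(9:ℝ)/5) (-(7:ℝ)/5) ⊆ {z : ℝ | 1 ≤ |z| ∧ |z| ≤ 2} := by
      intro z hz
      simp only [mem_setOf_eq]
      rw [abs_of_neg (by linarith [hz.2])]
      exact ⟨by linarith [hz.2], by linarith [hz.1]⟩
    have hCS : ∫ z in Ioc (-(9:ℝ)/5) (-(7:ℝ)/5), ‖v z‖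
        ≤ 2 * Real.sqrt (∫ z in Ioc (-(9:ℝ)/5) (-(7:ℝ)/5), ‖v z‖ ^ 2) := by
      apply l1_le_two_sqrt_l2 measurableSet_Ioc
      · rw [Real.volume_Ioc]
        rw [show (4:ENNReal) = ENNReal.ofReal 4 by norm_num]
        exact ENNReal.ofReal_le_ofReal (by norm_num)
      · exact fun z => norm_nonneg _
      · exact ((hvIcc97.norm).mono Ioc_subset_Icc_self).aestronglyMeasurable measurableSet_Ioc
      · exact ((hvIcc97.norm.pow 2).integrableOn_compact isCompact_Icc).mono_set
          Ioc_subset_Icc_self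
    have hmono : ∫ z in Ioc (-(9:ℝ)/5) (-(7:ℝ)/5), ‖v z‖ ^ 2
        ≤ ∫ z in {z : ℝ | 1 ≤ |z| ∧ |z| ≤ 2}, ‖v z‖ ^ 2 :=
      setIntegral_mono_set hOint hvnn2 (HasSubset.Subset.eventuallyLE hsubO)
    calc ‖∫ x in (-(9:ℝ)/5)..(-(7:ℝ)/5), v x * Q x‖
        ≤ ∫ x in (-(9:ℝ)/5)..(-(7:ℝ)/5), ‖v x * Q x‖ :=
          intervalIntegral.norm_integral_le_integral_norm (by norm_num)
      _ ≤ ∫ x in (-(9:ℝ)/5)..(-(7:ℝ)/5), (53 * M) * ‖v x‖ := by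
          apply intervalIntegral.integral_mono_on (by norm_num)
          · apply ContinuousOn.intervalIntegrable; rw [uIcc_of_le (by norm_num)]
            exact (hvIcc97.mul hQc.continuousOn).norm
          · apply ContinuousOn.intervalIntegrable; rw [uIcc_of_le (by norm_num)]
            exact continuousOn_const.mul hvIcc97.norm
          · intro x hx
            rw [norm_mul, mul_comm]
            exact mul_le_mul_of_nonneg_right (hQbd x hx) (norm_nonneg _)
      _ = (53 * M) * ∫ x in (-(9:ℝ)/5)..(-(7:ℝ)/5), ‖v x‖ :=
          intervalIntegral.integral_const_mul _ _
      _ = (53 * M) * ∫ z in Ioc (-(9:ℝ)/5) (-(7:ℝ)/5), ‖v z‖ := by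
          rw [intervalIntegral.integral_of_le (by norm_num)]
      _ ≤ (53 * M) * (2 * Real.sqrt (∫ z in Ioc (-(9:ℝ)/5) (-(7:ℝ)/5), ‖v z‖ ^ 2)) :=
          mul_le_mul_of_nonneg_left hCS (by positivity)
      _ ≤ (53 * M) * (2 * Real.sqrt (∫ z in {z : ℝ | 1 ≤ |z| ∧ |z| ≤ 2}, ‖v z‖ ^ 2)) := by
          apply mul_le_mul_of_nonneg_left _ (by positivity)
          exact mul_le_mul_of_nonneg_left (Real.sqrt_le_sqrt hmono) (by norm_num)
      _ = 106 * M * Real.sqrt (∫ z in {z : ℝ | 1 ≤ |z| ∧ |z| ≤ 2}, ‖v z‖ ^ 2) := by ring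
  -- final assembly
  calc ‖v z₀‖
      = ‖((∫ x in (-(9:ℝ)/5)..z₀, f x * Wm x) + ∫ x in z₀..((9:ℝ)/5), f x * Wp x)
        - ((∫ x in (-(9:ℝ)/5)..z₀, v x * Q x) + ∫ x in z₀..((9:ℝ)/5), v x * P x)‖ := by
        rw [← hrep]
    _ ≤ ‖(∫ x in (-(9:ℝ)/5)..z₀, f x * Wm x) + ∫ x in z₀..((9:ℝ)/5), f x * Wp x‖
        + ‖(∫ x in (-(9:ℝ)/5)..z₀, v x * Q x) + ∫ x in z₀..((9:ℝ)/5), v x * P x‖ :=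
        norm_sub_le _ _
    _ ≤ (‖∫ x in (-(9:ℝ)/5)..z₀, f x * Wm x‖ + ‖∫ x in z₀..((9:ℝ)/5), f x * Wp x‖)
        + (‖∫ x in (-(9:ℝ)/5)..z₀, v x * Q x‖ + ‖∫ x in z₀..((9:ℝ)/5), v x * P x‖) :=
        add_le_add (norm_add_le _ _) (norm_add_le _ _)
    _ ≤ ((31 * ∫ z in Ioc (-(9:ℝ)/5) ((9:ℝ)/5), ‖f z‖)
          + 31 * ∫ z in Ioc (-(9:ℝ)/5) ((9:ℝ)/5), ‖f z‖)
        + (106 * M * Real.sqrt (∫ z in {z : ℝ | 1 ≤ |z| ∧ |z| ≤ 2}, ‖v z‖ ^ 2)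
          + 106 * M * Real.sqrt (∫ z in {z : ℝ | 1 ≤ |z| ∧ |z| ≤ 2}, ‖v z‖ ^ 2)) :=
        add_le_add (add_le_add hNfm hNfp) (add_le_add hQterm hPterm)
    _ = (212 * M) * Real.sqrt (∫ z in {z : ℝ | 1 ≤ |z| ∧ |z| ≤ 2}, ‖v z‖ ^ 2)
        + 62 * ∫ z in Ioc (-(9:ℝ)/5) ((9:ℝ)/5), ‖f z‖ := by ring




end SemiclassicalKey

noncomputable section SemiclassicalKernel

lemma exp_three_lt : Real.exp 3 < 20.2 := by
  have h1 : Real.exp 3 = Real.exp 1 ^ 3 := by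
    rw [show (3:ℝ) = ((3:ℕ):ℝ) * 1 by norm_num, Real.exp_nat_mul]
  have h2 : Real.exp 1 < 2.7182818286 := Real.exp_one_lt_d9
  have h3 : (0:ℝ) < Real.exp 1 := Real.exp_pos 1
  rw [h1]
  calc Real.exp 1 ^ 3 < 2.7182818286 ^ 3 := pow_lt_pow_left₀ h2 h3.le (by norm_num)
    _ < 20.2 := by norm_num

lemma exists_kernel (μ : ℝ) : ∃ S S1 S2 : ℝ → ℝ,
    (∀ r, HasDerivAt S (S1 r) r) ∧ (∀ r, HasDerivAt S1 (S2 r) r) ∧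
    (∀ r, S2 r = -μ * S r) ∧ S1 0 = 1/2 ∧
    (∀ r ∈ Icc (0:ℝ) 3, |S r| ≤ 31 ∧ |S1 r| ≤ 11) := by
  rcases lt_trichotomy μ 0 with hμ | hμ | hμ
  · -- negative case
    set κ := Real.sqrt (-μ) with hκdef
    have hκpos : 0 < κ := Real.sqrt_pos.2 (by linarith)
    have hκ2 : κ^2 = -μ := Real.sq_sqrt (by linarith)
    have hinner : ∀ r : ℝ, HasDerivAt (fun x : ℝ => κ*x) κ r := by
      intro r; simpa using (hasDerivAt_id r).const_mul κ
    have hinnern : ∀ r : ℝ, HasDerivAt (fun x : ℝ => -(κ*x)) (-κ) r := fun r => (hinner r).neg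
    by_cases hκ1 : κ ≤ 1
    · -- small κ : sinh kernel
      refine ⟨fun r => Real.sinh (κ*r) / (2*κ), fun r => Real.cosh (κ*r) / 2,
        fun r => -μ * (Real.sinh (κ*r) / (2*κ)), fun r => ?_, fun r => ?_, fun r => rfl,
        by simp, fun r hr => ?_⟩
      · have h := ((Real.hasDerivAt_sinh (κ*r)).comp r (hinner r)).div_const (2*κ)
        refine h.congr_deriv ?_
        field_simp
      · have h := ((Real.hasDerivAt_cosh (κ*r)).comp r (hinner r)).div_const 2
        refine h.congr_deriv ?_
        rw [← hκ2]
        field_simp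
      · obtain ⟨hr0, hr3⟩ := hr
        have ht0 : 0 ≤ κ * r := mul_nonneg hκpos.le hr0
        have ht3 : κ * r ≤ 3 := by
          calc κ * r ≤ 1 * 3 := mul_le_mul hκ1 hr3 hr0 zero_le_one
            _ = 3 := by norm_num
        have hexp3 : Real.exp (κ*r) ≤ Real.exp 3 := Real.exp_le_exp.2 ht3
        have hexple : Real.exp (-(κ*r)) ≤ 1 := by
          rw [show (1:ℝ) = Real.exp 0 by simp]
          exact Real.exp_le_exp.2 (by linarith)
        have hexppos := Real.exp_pos (κ*r)
        have hexpnpos := Real.exp_pos (-(κ*r))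
        have he3 := exp_three_lt
        constructor
        · -- sinh bound
          have hkey : Real.sinh (κ*r) ≤ (κ*r) * Real.exp (κ*r) := by
            rw [Real.sinh_eq]
            have h1 : 1 - 2*(κ*r) ≤ Real.exp (-(2*(κ*r))) := by
              have := Real.add_one_le_exp (-(2*(κ*r))); linarith
            have h2 : Real.exp (κ*r) * Real.exp (-(2*(κ*r))) = Real.exp (-(κ*r)) := by
              rw [← Real.exp_add]; ring_nf
            nlinarith
          have hnn : 0 ≤ Real.sinh (κ*r) := by
            rw [Real.sinh_eq]
            have : Real.exp (-(κ*r)) ≤ Real.exp (κ*r) := Real.exp_le_exp.2 (by linarith)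
            linarith
          rw [abs_of_nonneg (div_nonneg hnn (by linarith))]
          rw [div_le_iff₀ (by linarith)]
          calc Real.sinh (κ*r) ≤ (κ*r) * Real.exp (κ*r) := hkey
            _ ≤ (κ*r) * 20.2 := by
                apply mul_le_mul_of_nonneg_left _ ht0
                linarith
            _ ≤ 31 * (2*κ) := by nlinarith [mul_le_mul_of_nonneg_left hr3 hκpos.le]
        · -- cosh bound
          have h : Real.cosh (κ*r) ≤ 22 := by
            rw [Real.cosh_eq]
            linarith
          have hpos : (0:ℝ) < Real.cosh (κ*r) := Real.cosh_pos (κ*r)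
          rw [abs_of_pos (by positivity)]
          linarith
    · -- large κ : decaying exponential kernel
      push_neg at hκ1
      refine ⟨fun r => -Real.exp (-(κ*r)) / (2*κ), fun r => Real.exp (-(κ*r)) / 2,
        fun r => -μ * (-Real.exp (-(κ*r)) / (2*κ)), fun r => ?_, fun r => ?_, fun r => rfl,
        by simp, fun r hr => ?_⟩
      · have h := (((Real.hasDerivAt_exp (-(κ*r))).comp r (hinnern r)).neg).div_const (2*κ)
        refine h.congr_deriv ?_
        field_simp
      · have h := ((Real.hasDerivAt_exp (-(κ*r))).comp r (hinnern r)).div_const 2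
        refine h.congr_deriv ?_
        rw [← hκ2]
        field_simp
      · obtain ⟨hr0, hr3⟩ := hr
        have hexple : Real.exp (-(κ*r)) ≤ 1 := by
          rw [show (1:ℝ) = Real.exp 0 by simp]
          exact Real.exp_le_exp.2 (by nlinarith)
        have hexppos := Real.exp_pos (-(κ*r))
        constructor
        · rw [abs_div, abs_neg, abs_of_pos hexppos, abs_of_pos (by linarith : (0:ℝ) < 2*κ)]
          rw [div_le_iff₀ (by linarith)]
          nlinarith
        · rw [abs_of_pos (by positivity)]
          rw [div_le_iff₀ (by norm_num : (0:ℝ) < 2)]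
          linarith
  · -- zero case
    refine ⟨fun r => r / 2, fun _ => 1/2, fun _ => 0, fun r => ?_, fun r => ?_,
      fun r => by rw [hμ]; ring, rfl, fun r hr => ?_⟩
    · simpa using (hasDerivAt_id r).div_const 2
    · exact hasDerivAt_const r _
    · obtain ⟨hr0, hr3⟩ := hr
      constructor
      · rw [abs_of_nonneg (by linarith)]; linarith
      · rw [abs_of_nonneg (by norm_num)]; norm_num
  · -- positive case : sine kernel
    set ω := Real.sqrt μ with hωdef
    have hωpos : 0 < ω := Real.sqrt_pos.2 hμ
    have hω2 : ω^2 = μ := Real.sq_sqrt hμ.le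
    have hinner : ∀ r : ℝ, HasDerivAt (fun x : ℝ => ω*x) ω r := by
      intro r; simpa using (hasDerivAt_id r).const_mul ω
    refine ⟨fun r => Real.sin (ω*r) / (2*ω), fun r => Real.cos (ω*r) / 2,
      fun r => -μ * (Real.sin (ω*r) / (2*ω)), fun r => ?_, fun r => ?_, fun r => rfl,
      by simp, fun r hr => ?_⟩
    · have h := ((Real.hasDerivAt_sin (ω*r)).comp r (hinner r)).div_const (2*ω)
      refine h.congr_deriv ?_
      field_simp
    · have h := ((Real.hasDerivAt_cos (ω*r)).comp r (hinner r)).div_const 2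
      refine h.congr_deriv ?_
      rw [← hω2]
      field_simp
    · obtain ⟨hr0, hr3⟩ := hr
      constructor
      · rw [abs_div, abs_of_pos (by linarith : (0:ℝ) < 2*ω)]
        rw [div_le_iff₀ (by linarith)]
        have h1 : |Real.sin (ω*r)| ≤ |ω*r| := Real.abs_sin_le_abs
        have h2 : |ω*r| = ω*r := abs_of_nonneg (mul_nonneg hωpos.le hr0)
        nlinarith
      · have h := Real.abs_cos_le_one (ω*r)
        rw [abs_div]
        rw [div_le_iff₀ (by norm_num : (0:ℝ) < |2|)]
        rw [abs_two]
        linarith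

end SemiclassicalKernel

/-- Rescaled one-dimensional semiclassical estimate (Proposition 2.4):
for `v` solving `(h β⁻² ∂_z² + 1 - h²η²) v = g` on `(-2,2)`,
`sup_{[-1,1]} ‖v‖ ≤ C (‖v‖_{L²({1≤|z|≤2})} + h⁻¹ β² ‖g‖_{L²(-2,2)})`. -/
theorem stmt_1 :
    ∃ C > 0, ∀ h : ℝ, h ∈ Ioc (0 : ℝ) 1 → ∀ β : ℝ, 1 ≤ β → β ≤ (Real.sqrt h)⁻¹ →
      ∀ (η : ℝ) (v g : ℝ → ℂ),
      ContinuousOn v (Icc (-2 : ℝ) 2) →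
      ContDiffOn ℝ 2 v (Ioo (-2 : ℝ) 2) →
      (∀ z ∈ Ioo (-2 : ℝ) 2,
        g z = (h : ℂ) * ((β : ℂ) ^ 2)⁻¹ * deriv (deriv v) z
          + (1 - (h : ℂ) ^ 2 * (η : ℂ) ^ 2) * v z) →
      IntegrableOn (fun z => ‖g z‖ ^ 2) (Ioo (-2 : ℝ) 2) →
      ∀ z ∈ Icc (-1 : ℝ) 1,
        ‖v z‖ ≤ C * (Real.sqrt (∫ z in {z : ℝ | 1 ≤ |z| ∧ |z| ≤ 2}, ‖v z‖ ^ 2) +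
          h⁻¹ * β ^ 2 * Real.sqrt (∫ z in Ioo (-2 : ℝ) 2, ‖g z‖ ^ 2)) := by
  obtain ⟨M, hM0, hM⟩ := chiA_deriv_bound
  refine ⟨212 * M + 125, by positivity, ?_⟩
  intro h hh β hβ1 hβ2 η v g hvc hv hgeq hg2 z₀ hz₀
  have hh0 : 0 < h := hh.1
  have hβ0 : (0:ℝ) < β := lt_of_lt_of_le one_pos hβ1
  set c₀ : ℝ := β^2 / h with hc₀
  have hc₀pos : 0 < c₀ := by positivity
  set μ : ℝ := c₀ * (1 - h^2*η^2) with hμ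
  set f : ℝ → ℂ := fun z => ((c₀ : ℝ) : ℂ) * g z with hf
  have hh0' : (h:ℂ) ≠ 0 := by exact_mod_cast hh0.ne'
  have hβ0' : (β:ℂ) ≠ 0 := by exact_mod_cast hβ0.ne'
  have hkey0 : ((c₀ : ℝ) : ℂ) * ((h:ℂ) * ((β:ℂ)^2)⁻¹) = 1 := by
    rw [hc₀]
    push_cast
    field_simp
  have hμc : ((μ : ℝ) : ℂ) = ((c₀ : ℝ) : ℂ) * (1 - (h:ℂ)^2*(η:ℂ)^2) := by
    rw [hμ]; push_cast; ring
  have hODE : ∀ z ∈ Ioo (-2:ℝ) 2, deriv (deriv v) z = f z - (μ:ℂ) * v z := by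
    intro z hz
    have hg := hgeq z hz
    rw [hf, hμc]
    linear_combination (-((c₀ : ℝ) : ℂ)) * hg - (deriv (deriv v) z) * hkey0
  obtain ⟨S, S1, S2, hd1, hd2, hode, h10, hbd⟩ := exists_kernel μ
  have hkey := key_estimate μ v f z₀ hz₀ hvc hv hODE hd1 hd2 hode h10 hbd hM0 hM
  -- continuity of g on the open interval
  have hIoo : IsOpen (Ioo (-2:ℝ) 2) := isOpen_Ioo
  have hv1cd' : ContDiffOn ℝ 1 (deriv v) (Ioo (-2:ℝ) 2) :=
    hv.deriv_of_isOpen (m := 1) hIoo (by norm_num)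
  have hv2c : ContinuousOn (deriv (deriv v)) (Ioo (-2:ℝ) 2) :=
    hv1cd'.continuousOn_deriv_of_isOpen hIoo (by norm_num)
  have hgc : ContinuousOn g (Ioo (-2:ℝ) 2) := by
    refine ContinuousOn.congr (f := fun z => (h : ℂ) * ((β : ℂ) ^ 2)⁻¹ * deriv (deriv v) z
      + (1 - (h : ℂ) ^ 2 * (η : ℂ) ^ 2) * v z)
      ((continuousOn_const.mul hv2c).add (continuousOn_const.mul hv.continuousOn)) ?_
    intro z hz; exact hgeq z hz
  have hsubIoc : Ioc (-(9:ℝ)/5) ((9:ℝ)/5) ⊆ Ioo (-2:ℝ) 2 := by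
    intro z hz; exact ⟨by linarith [hz.1], by linarith [hz.2]⟩
  -- rewrite the f-term
  have hfInt : ∫ z in Ioc (-(9:ℝ)/5) ((9:ℝ)/5), ‖f z‖
      = c₀ * ∫ z in Ioc (-(9:ℝ)/5) ((9:ℝ)/5), ‖g z‖ := by
    rw [← MeasureTheory.integral_const_mul]
    refine setIntegral_congr_fun measurableSet_Ioc fun z _ => ?_
    rw [hf]
    rw [norm_mul, Complex.norm_real, Real.norm_eq_abs, abs_of_pos hc₀pos]
  have hgl1 : ∫ z in Ioc (-(9:ℝ)/5) ((9:ℝ)/5), ‖g z‖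
      ≤ 2 * Real.sqrt (∫ z in Ioc (-(9:ℝ)/5) ((9:ℝ)/5), ‖g z‖ ^ 2) := by
    apply l1_le_two_sqrt_l2 measurableSet_Ioc
    · rw [Real.volume_Ioc]
      rw [show (4:ENNReal) = ENNReal.ofReal 4 by norm_num]
      exact ENNReal.ofReal_le_ofReal (by norm_num)
    · exact fun z => norm_nonneg _
    · exact ((hgc.mono hsubIoc).norm).aestronglyMeasurable measurableSet_Ioc
    · exact hg2.mono_set hsubIoc
  have hgnn : 0 ≤ᵐ[volume.restrict (Ioo (-2:ℝ) 2)] fun z => ‖g z‖ ^ 2 :=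
    Filter.Eventually.of_forall fun z => pow_nonneg (norm_nonneg _) 2
  have hgmono : ∫ z in Ioc (-(9:ℝ)/5) ((9:ℝ)/5), ‖g z‖ ^ 2
      ≤ ∫ z in Ioo (-2:ℝ) 2, ‖g z‖ ^ 2 :=
    setIntegral_mono_set hg2 hgnn (HasSubset.Subset.eventuallyLE hsubIoc)
  set X := Real.sqrt (∫ z in {z : ℝ | 1 ≤ |z| ∧ |z| ≤ 2}, ‖v z‖ ^ 2) with hX
  set Y := Real.sqrt (∫ z in Ioo (-2:ℝ) 2, ‖g z‖ ^ 2) with hY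
  have hX0 : 0 ≤ X := Real.sqrt_nonneg _
  have hY0 : 0 ≤ Y := Real.sqrt_nonneg _
  have hc₀eq : c₀ = h⁻¹ * β^2 := by rw [hc₀]; ring
  have hgl1' : ∫ z in Ioc (-(9:ℝ)/5) ((9:ℝ)/5), ‖g z‖ ≤ 2 * Y := by
    refine le_trans hgl1 ?_
    exact mul_le_mul_of_nonneg_left (Real.sqrt_le_sqrt hgmono) (by norm_num)
  calc ‖v z₀‖ ≤ (212 * M) * X + 62 * ∫ z in Ioc (-(9:ℝ)/5) ((9:ℝ)/5), ‖f z‖ := hkey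
    _ = (212 * M) * X + 62 * c₀ * ∫ z in Ioc (-(9:ℝ)/5) ((9:ℝ)/5), ‖g z‖ := by
        rw [hfInt]; ring
    _ ≤ (212 * M) * X + 62 * c₀ * (2 * Y) := by
        refine add_le_add_right (mul_le_mul_of_nonneg_left hgl1' (by positivity)) _
    _ = (212 * M) * X + 124 * (h⁻¹ * β^2 * Y) := by rw [hc₀eq]; ring
    _ ≤ (212 * M + 125) * X + (212 * M + 125) * (h⁻¹ * β^2 * Y) := by
        have hiY : 0 ≤ h⁻¹ * β^2 * Y := by positivity
        refine add_le_add (mul_le_mul_of_nonneg_right (by linarith) hX0)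
          (mul_le_mul_of_nonneg_right (by linarith) hiY)
    _ = (212 * M + 125) * (X + h⁻¹ * β^2 * Y) := by ring
end

section
/- Let A, B > 0 be real numbers and let n, m, p, q ∈ ℤ satisfy q·n - p·m = 1. Set L = √(n²A² + m²B²), Ξ₀ = (nA/L, mB/L), Ξ₀⊥ = (-mB/L, nA/L), and define F : ℝ² → ℝ² by F(x,y) = x·Ξ₀⊥ + y·Ξ₀. Set a = A·B/L, b = L, and γ = (p·n·A² + q·m·B²)/L. Then for every function u : ℝ² → ℂ satisfying u(X + (kA, ℓB)) = u(X) for all k, ℓ ∈ ℤ and all X ∈ ℝ², one has u(F(x + k·a, y + ℓ·b)) = u(F(x, y - k·γ)) for all k, ℓ ∈ ℤ and all (x,y) ∈ ℝ². -/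
open Real

/-- Pseudo-periodicity lemma (Lemma 3.1, irrational case): after the orthogonal change of
coordinates `F` adapted to the rational direction `Ξ₀ = (nA, mB)/L`, a function periodic
with respect to the lattice `Aℤ × Bℤ` satisfies the pseudo-periodicity relation
`u(F(x + ka, y + ℓb)) = u(F(x, y - kγ))`. -/
theorem stmt_4 (A B : ℝ) (hA : 0 < A) (hB : 0 < B) (n m p q : ℤ)
    (hdet : q * n - p * m = 1)
    (L : ℝ) (hL : L = Real.sqrt ((n : ℝ) ^ 2 * A ^ 2 + (m : ℝ) ^ 2 * B ^ 2))
    (Ξ₀ Ξ₀perp : ℝ × ℝ)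
    (hΞ₀ : Ξ₀ = ((n : ℝ) * A / L, (m : ℝ) * B / L))
    (hΞ₀perp : Ξ₀perp = (-((m : ℝ) * B) / L, (n : ℝ) * A / L))
    (F : ℝ × ℝ → ℝ × ℝ) (hF : ∀ x y : ℝ, F (x, y) = x • Ξ₀perp + y • Ξ₀)
    (a b γ : ℝ) (ha : a = A * B / L) (hb : b = L)
    (hγ : γ = ((p : ℝ) * n * A ^ 2 + (q : ℝ) * m * B ^ 2) / L)
    (u : ℝ × ℝ → ℂ)
    (hper : ∀ (X : ℝ × ℝ) (k l : ℤ), u (X.1 + k * A, X.2 + l * B) = u X) :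
    ∀ (k l : ℤ) (x y : ℝ),
      u (F (x + k * a, y + l * b)) = u (F (x, y - k * γ)) := by
  intro k l x y
  -- n and m are not both zero
  have hnm : (n : ℝ) ^ 2 * A ^ 2 + (m : ℝ) ^ 2 * B ^ 2 > 0 := by
    rcases eq_or_ne n 0 with hn | hn
    · have hm : m ≠ 0 := by rintro rfl; simp [hn] at hdet
      have : (m : ℝ) ≠ 0 := Int.cast_ne_zero.2 hm
      positivity
    · have : (n : ℝ) ≠ 0 := Int.cast_ne_zero.2 hn
      positivity
  have hL0 : 0 < L := by rw [hL]; exact Real.sqrt_pos.2 hnm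
  have hLne : L ≠ 0 := ne_of_gt hL0
  have hL2 : L ^ 2 = (n : ℝ) ^ 2 * A ^ 2 + (m : ℝ) ^ 2 * B ^ 2 := by
    rw [hL, Real.sq_sqrt hnm.le]
  have hdetR : (q : ℝ) * n - p * m = 1 := by exact_mod_cast congrArg (Int.cast : ℤ → ℝ) hdet
  have key : F (x + k * a, y + l * b)
      = ((F (x, y - k * γ)).1 + ((k * p + l * n : ℤ) : ℝ) * A,
         (F (x, y - k * γ)).2 + ((k * q + l * m : ℤ) : ℝ) * B) := by
    subst ha hb hγ
    rw [hF, hF, hΞ₀, hΞ₀perp]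
    simp only [Prod.mk_add_mk, Prod.smul_mk, smul_eq_mul, Prod.mk.injEq]
    push_cast
    constructor
    · field_simp
      linear_combination (-(k:ℝ) * A * p) * hL2 + ((k:ℝ) * A * B^2 * m) * hdetR
    · field_simp
      linear_combination (-(k:ℝ) * B * q) * hL2 + (-(k:ℝ) * A^2 * B * n) * hdetR
  rw [key]
  exact hper (F (x, y - k * γ)) (k * p + l * n) (k * q + l * m)
end

section
/- Let A, B > 0 be real numbers with B/A = r/s for some nonzero integers r, s, and let n, m ∈ ℤ be not both zero. Set L = √(n²A² + m²B²), Ξ₀ = (nA/L, mB/L), Ξ₀⊥ = (-mB/L, nA/L), and define F : ℝ² → ℝ² by F(x,y) = x·Ξ₀⊥ + y·Ξ₀. Set a = A·B/L, b = L, and ã = (n²s² + m²r²)·a. Then for every function u : ℝ² → ℂ satisfying u(X + (kA, ℓB)) = u(X) for all k, ℓ ∈ ℤ and all X ∈ ℝ², one has u(F(x + k·ã, y + ℓ·b)) = u(F(x, y)) for all k, ℓ ∈ ℤ and all (x,y) ∈ ℝ². -/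
open Real

/-- Pseudo-periodicity lemma (Lemma 3.1, rational case): when `B/A = r/s` is rational,
the change of coordinates `F` adapted to the direction `Ξ₀ = (nA, mB)/L` transforms a
function periodic with respect to `Aℤ × Bℤ` into a genuinely `aTildeℤ × bℤ`-periodic function,
where `aTilde = (n²s² + m²r²)·AB/L` and `b = L`. -/
theorem stmt_5 (A B : ℝ) (hA : 0 < A) (hB : 0 < B) (r s : ℤ) (hr : r ≠ 0) (hs : s ≠ 0)
    (hBA : B / A = (r : ℝ) / (s : ℝ)) (n m : ℤ) (hnm : ¬(n = 0 ∧ m = 0))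
    (L : ℝ) (hL : L = Real.sqrt ((n : ℝ) ^ 2 * A ^ 2 + (m : ℝ) ^ 2 * B ^ 2))
    (Ξ₀ Ξ₀perp : ℝ × ℝ)
    (hΞ₀ : Ξ₀ = ((n : ℝ) * A / L, (m : ℝ) * B / L))
    (hΞ₀perp : Ξ₀perp = (-((m : ℝ) * B) / L, (n : ℝ) * A / L))
    (F : ℝ × ℝ → ℝ × ℝ) (hF : ∀ x y : ℝ, F (x, y) = x • Ξ₀perp + y • Ξ₀)
    (a b aTilde : ℝ) (ha : a = A * B / L) (hb : b = L)
    (haTilde : aTilde = ((n : ℝ) ^ 2 * (s : ℝ) ^ 2 + (m : ℝ) ^ 2 * (r : ℝ) ^ 2) * a)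
    (u : ℝ × ℝ → ℂ)
    (hper : ∀ (X : ℝ × ℝ) (k l : ℤ), u (X.1 + k * A, X.2 + l * B) = u X) :
    ∀ (k l : ℤ) (x y : ℝ),
      u (F (x + k * aTilde, y + l * b)) = u (F (x, y)) := by

  intro k l x y
  have hL2 : (0:ℝ) < (n:ℝ)^2*A^2 + (m:ℝ)^2*B^2 := by
    rcases not_and_or.mp hnm with h | h
    · have hn : (n:ℝ) ≠ 0 := Int.cast_ne_zero.mpr h
      positivity
    · have hm : (m:ℝ) ≠ 0 := Int.cast_ne_zero.mpr h
      positivity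
  have hLpos : 0 < L := by rw [hL]; exact Real.sqrt_pos.mpr hL2
  have hLne : L ≠ 0 := ne_of_gt hLpos
  have hLsq : L^2 = (n:ℝ)^2*A^2 + (m:ℝ)^2*B^2 := by
    rw [hL, Real.sq_sqrt hL2.le]
  have hsne : (s:ℝ) ≠ 0 := Int.cast_ne_zero.mpr hs
  have hAr : B * s = A * r := by
    field_simp at hBA
    linarith
  have key : F (x + k*aTilde, y + l*b)
      = ((F (x,y)).1 + ((l*n - k*m*r^2 : ℤ):ℝ) * A,
         (F (x,y)).2 + ((k*n*s^2 + l*m : ℤ):ℝ) * B) := by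
    rw [hF, hF, hΞ₀, hΞ₀perp]
    simp only [Prod.smul_mk, smul_eq_mul, Prod.mk_add_mk, Prod.fst_add, Prod.snd_add,
      Prod.mk.injEq]
    push_cast
    rw [haTilde, ha, hb]
    constructor
    · field_simp
      linear_combination ((k:ℝ)*(m:ℝ)*A*(r:ℝ)^2) * hLsq
        - ((k:ℝ)*(m:ℝ)*A*(n:ℝ)^2*((s:ℝ)*B + (r:ℝ)*A)) * hAr
    · field_simp
      linear_combination (-((k:ℝ)*(n:ℝ)*B*(s:ℝ)^2)) * hLsq
        - ((k:ℝ)*(n:ℝ)*B*(m:ℝ)^2*((s:ℝ)*B + (r:ℝ)*A)) * hAr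
  rw [key]
  exact hper (F (x,y)) _ _
end

section
/- Let m : ℝ² → ℝ be measurable and bounded, with m(X) ≥ 0 for almost every X and ∫_{[0,2]²} m > 0. Then there exists a constant C > 0 such that for every continuously differentiable function u : ℝ² → ℂ that is 2-periodic in each variable, ∫_{[0,2]²} ‖u‖² ≤ C·( ∫_{[0,2]²} ( ‖∂_x u‖² + ‖∂_y u‖² ) + ∫_{[0,2]²} m·‖u‖² ). -/
open MeasureTheory Set intervalIntegral

/-- Cauchy–Schwarz on `[0,2]`: `(∫₀² g)² ≤ 2 ∫₀² g²`. -/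
lemma aux_cs_lemma (g : ℝ → ℝ) (hg : Continuous g) :
    (∫ t in (0:ℝ)..2, g t) ^ 2 ≤ 2 * ∫ t in (0:ℝ)..2, g t ^ 2 := by
  set I1 := ∫ t in (0:ℝ)..2, g t with hI1
  set I2 := ∫ t in (0:ℝ)..2, g t ^ 2 with hI2
  have key : ∀ s : ℝ, g s * I1 ≤ g s ^ 2 + I2 / 2 := by
    intro s
    have h1 : g s * I1 = ∫ t in (0:ℝ)..2, g s * g t := (intervalIntegral.integral_const_mul _ _).symm
    have h2 : (∫ t in (0:ℝ)..2, g s * g t) ≤ ∫ t in (0:ℝ)..2, (g s ^ 2 + g t ^ 2) / 2 := by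
      apply intervalIntegral.integral_mono_on (by norm_num)
      · exact (continuous_const.mul hg).intervalIntegrable _ _
      · exact ((continuous_const.add (hg.pow 2)).div_const 2).intervalIntegrable _ _
      · intro t _; nlinarith [sq_nonneg (g s - g t)]
    have h3 : (∫ t in (0:ℝ)..2, (g s ^ 2 + g t ^ 2) / 2) = g s ^ 2 + I2 / 2 := by
      rw [intervalIntegral.integral_div, intervalIntegral.integral_add (g := fun t => g t ^ 2)
        (intervalIntegrable_const) ((hg.pow 2).intervalIntegrable _ _),
        intervalIntegral.integral_const]
      simp [hI2]; ring
    linarith [h1 ▸ h2.trans_eq h3]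
  have h4 : I1 ^ 2 = ∫ s in (0:ℝ)..2, g s * I1 := by
    rw [intervalIntegral.integral_mul_const]; ring
  have h5 : (∫ s in (0:ℝ)..2, g s * I1) ≤ ∫ s in (0:ℝ)..2, (g s ^ 2 + I2 / 2) := by
    apply intervalIntegral.integral_mono_on (by norm_num)
    · exact (hg.mul continuous_const).intervalIntegrable _ _
    · exact ((hg.pow 2).add continuous_const).intervalIntegrable _ _
    · exact fun s _ => key s
  have h6 : (∫ s in (0:ℝ)..2, (g s ^ 2 + I2 / 2)) = I2 + 2 * (I2 / 2) := by
    rw [intervalIntegral.integral_add (f := fun t => g t ^ 2) ((hg.pow 2).intervalIntegrable _ _) intervalIntegrable_const,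
      intervalIntegral.integral_const]
    simp [hI2]
  nlinarith [h4 ▸ h5.trans_eq h6]

lemma aux_hd1 {u : ℝ × ℝ → ℂ} (hu : ContDiff ℝ 1 u) (x y : ℝ) :
    HasDerivAt (fun t => u (t, y)) (fderiv ℝ u (x, y) (1, 0)) x := by
  have h := (hu.differentiable one_ne_zero (x, y)).hasFDerivAt
  have h2 : HasDerivAt (fun t : ℝ => (t, y)) ((1 : ℝ), (0 : ℝ)) x :=
    (hasDerivAt_id x).prodMk (hasDerivAt_const x y)
  exact h.comp_hasDerivAt x h2

lemma aux_hd2 {u : ℝ × ℝ → ℂ} (hu : ContDiff ℝ 1 u) (x y : ℝ) :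
    HasDerivAt (fun t => u (x, t)) (fderiv ℝ u (x, y) (0, 1)) y := by
  have h := (hu.differentiable one_ne_zero (x, y)).hasFDerivAt
  have h2 : HasDerivAt (fun t : ℝ => (x, t)) ((0 : ℝ), (1 : ℝ)) y :=
    (hasDerivAt_const y x).prodMk (hasDerivAt_id y)
  exact h.comp_hasDerivAt y h2

lemma aux_ftc {v : ℝ → ℂ} {d : ℝ → ℂ} (hd : ∀ t, HasDerivAt v (d t) t) (hc : Continuous d)
    {x x' : ℝ} (hx : x ∈ Icc (0:ℝ) 2) (hx' : x' ∈ Icc (0:ℝ) 2) :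
    ‖v x - v x'‖ ≤ ∫ t in (0:ℝ)..2, ‖d t‖ := by
  have heq : v x - v x' = ∫ t in x'..x, d t := by
    rw [intervalIntegral.integral_eq_sub_of_hasDerivAt (fun t _ => hd t)
      (hc.intervalIntegrable _ _)]
  rw [heq]
  calc ‖∫ t in x'..x, d t‖
      ≤ |∫ t in x'..x, ‖d t‖| := intervalIntegral.norm_integral_le_abs_integral_norm
    _ ≤ |∫ t in (0:ℝ)..2, ‖d t‖| := by
        apply intervalIntegral.abs_integral_mono_interval
        · exact Set.uIoc_subset_uIoc_of_uIcc_subset_uIcc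
            (by rw [uIcc_of_le (by norm_num : (0:ℝ) ≤ 2)]; exact Set.uIcc_subset_Icc hx' hx)
        · exact ae_of_all _ (fun t => norm_nonneg _)
        · exact hc.norm.intervalIntegrable _ _
    _ = ∫ t in (0:ℝ)..2, ‖d t‖ := by
        apply abs_of_nonneg
        exact intervalIntegral.integral_nonneg (by norm_num) (fun t _ => norm_nonneg _)

/-- Integrability of `m * g` on a compact set, for `m` bounded measurable, `g` continuous. -/
lemma aux_int_bdd_mul {s : Set (ℝ × ℝ)} (hs : MeasurableSet s) (hcs : IsCompact s)
    {m : ℝ × ℝ → ℝ} (hm : Measurable m) {M : ℝ} (hM : ∀ X, |m X| ≤ M)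
    {g : ℝ × ℝ → ℝ} (hg : Continuous g) : IntegrableOn (fun X => m X * g X) s := by
  obtain ⟨Cg, hCg⟩ := hcs.exists_bound_of_continuousOn hg.continuousOn
  haveI : IsFiniteMeasure (volume.restrict s) :=
    ⟨by rw [Measure.restrict_apply_univ]; exact hcs.measure_lt_top⟩
  refine (integrable_const (M * Cg)).mono' ((hm.mul hg.measurable).aestronglyMeasurable) ?_
  filter_upwards [ae_restrict_mem hs] with X hX
  rw [Real.norm_eq_abs, abs_mul]
  have h1 : |g X| ≤ Cg := by simpa [Real.norm_eq_abs] using hCg X hX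
  exact mul_le_mul (hM X) h1 (abs_nonneg _) (le_trans (abs_nonneg _) (hM X))

/-- Norm-equivalence lemma (Appendix A.2, torus case): for a nontrivial nonnegative
bounded potential `m`, the degenerate energy norm `(‖∇u‖² + ‖m^{1/2}u‖²)^{1/2}` controls
the full `L²` norm of any `C¹` function `u` that is 2-periodic in each variable. -/
theorem stmt_9 (m : ℝ × ℝ → ℝ) (hmeas : Measurable m) (hbd : ∃ M : ℝ, ∀ X, |m X| ≤ M)
    (hnonneg : ∀ᵐ X : ℝ × ℝ, 0 ≤ m X)
    (hpos : 0 < ∫ X in Icc (0 : ℝ) 2 ×ˢ Icc (0 : ℝ) 2, m X) :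
    ∃ C > 0, ∀ u : ℝ × ℝ → ℂ, ContDiff ℝ 1 u →
      (∀ (x y : ℝ) (k l : ℤ), u (x + 2 * k, y + 2 * l) = u (x, y)) →
      (∫ X in Icc (0 : ℝ) 2 ×ˢ Icc (0 : ℝ) 2, ‖u X‖ ^ 2) ≤
        C * ((∫ X in Icc (0 : ℝ) 2 ×ˢ Icc (0 : ℝ) 2,
            (‖deriv (fun t => u (t, X.2)) X.1‖ ^ 2 + ‖deriv (fun t => u (X.1, t)) X.2‖ ^ 2))
          + ∫ X in Icc (0 : ℝ) 2 ×ˢ Icc (0 : ℝ) 2, m X * ‖u X‖ ^ 2) := by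
  obtain ⟨M, hM⟩ := hbd
  have hM0 : 0 ≤ M := le_trans (abs_nonneg _) (hM (0, 0))
  set Q : Set (ℝ × ℝ) := Icc (0:ℝ) 2 ×ˢ Icc (0:ℝ) 2 with hQdef
  set I := ∫ X in Q, m X with hIdef
  have hI : 0 < I := hpos
  have hQm : MeasurableSet Q := measurableSet_Icc.prod measurableSet_Icc
  have hQc : IsCompact Q := isCompact_Icc.prod isCompact_Icc
  refine ⟨(16 * I + 64 * M + 8) / I, by positivity, ?_⟩
  intro u hu _
  -- derivatives
  set P1 : ℝ × ℝ → ℂ := fun X => fderiv ℝ u (X.1, X.2) (1, 0) with hP1def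
  set P2 : ℝ × ℝ → ℂ := fun X => fderiv ℝ u (X.1, X.2) (0, 1) with hP2def
  have hder1 : ∀ x y : ℝ, deriv (fun t => u (t, y)) x = P1 (x, y) := fun x y =>
    (aux_hd1 hu x y).deriv
  have hder2 : ∀ x y : ℝ, deriv (fun t => u (x, t)) y = P2 (x, y) := fun x y =>
    (aux_hd2 hu x y).deriv
  have hfc : Continuous (fderiv ℝ u) := hu.continuous_fderiv one_ne_zero
  have hc1 : Continuous P1 :=
    (hfc.comp (continuous_fst.prodMk continuous_snd)).clm_apply continuous_const
  have hc2 : Continuous P2 :=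
    (hfc.comp (continuous_fst.prodMk continuous_snd)).clm_apply continuous_const
  -- 1-D integrals of derivative norms
  set A : ℝ → ℝ := fun y => ∫ t in (0:ℝ)..2, ‖P1 (t, y)‖ with hAdef
  set B : ℝ → ℝ := fun x => ∫ t in (0:ℝ)..2, ‖P2 (x, t)‖ with hBdef
  set F : ℝ → ℝ := fun y => ∫ t in (0:ℝ)..2, ‖P1 (t, y)‖ ^ 2 with hFdef
  set G : ℝ → ℝ := fun x => ∫ t in (0:ℝ)..2, ‖P2 (x, t)‖ ^ 2 with hGdef
  have hFcont : Continuous F := by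
    apply intervalIntegral.continuous_parametric_intervalIntegral_of_continuous'
    exact ((hc1.comp (continuous_snd.prodMk continuous_fst)).norm.pow 2)
  have hGcont : Continuous G := by
    apply intervalIntegral.continuous_parametric_intervalIntegral_of_continuous'
    exact ((hc2.comp (continuous_fst.prodMk continuous_snd)).norm.pow 2)
  have hGnonneg : ∀ x, 0 ≤ G x := fun x =>
    intervalIntegral.integral_nonneg (by norm_num) (fun t _ => sq_nonneg _)
  -- pointwise bound
  have hptw : ∀ X ∈ Q, ∀ X' ∈ Q, ‖u X‖ ^ 2 ≤ 2 * ‖u X'‖ ^ 2 + 8 * F X.2 + 8 * G X'.1 := by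
    rintro ⟨x, y⟩ hX ⟨x', y'⟩ hX'
    obtain ⟨hx, hy⟩ := hX
    obtain ⟨hx', hy'⟩ := hX'
    have t1 : ‖u (x, y) - u (x', y)‖ ≤ A y := by
      apply aux_ftc (fun t => aux_hd1 hu t y) _ hx hx'
      exact hc1.comp (continuous_id.prodMk continuous_const)
    have t2 : ‖u (x', y) - u (x', y')‖ ≤ B x' := by
      apply aux_ftc (fun t => aux_hd2 hu x' t) _ hy hy'
      exact hc2.comp (continuous_const.prodMk continuous_id)
    have tri : ‖u (x, y)‖ ≤ ‖u (x', y')‖ + A y + B x' := by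
      have e : u (x, y) = u (x', y') + (u (x', y) - u (x', y')) + (u (x, y) - u (x', y)) := by ring
      calc ‖u (x, y)‖ = ‖u (x', y') + (u (x', y) - u (x', y')) + (u (x, y) - u (x', y))‖ := by
            rw [← e]
        _ ≤ ‖u (x', y')‖ + ‖u (x', y) - u (x', y')‖ + ‖u (x, y) - u (x', y)‖ :=
            norm_add₃_le
        _ ≤ ‖u (x', y')‖ + A y + B x' := by linarith
    have hA2 : A y ^ 2 ≤ 2 * F y := by
      apply aux_cs_lemma
      exact (hc1.comp (continuous_id.prodMk continuous_const)).norm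
    have hB2 : B x' ^ 2 ≤ 2 * G x' := by
      apply aux_cs_lemma
      exact (hc2.comp (continuous_const.prodMk continuous_id)).norm
    have hAnn : 0 ≤ A y := intervalIntegral.integral_nonneg (by norm_num) (fun t _ => norm_nonneg _)
    have hBnn : 0 ≤ B x' := intervalIntegral.integral_nonneg (by norm_num) (fun t _ => norm_nonneg _)
    have h0 : (0:ℝ) ≤ ‖u (x, y)‖ := norm_nonneg _
    have h0' : (0:ℝ) ≤ ‖u (x', y')‖ := norm_nonneg _
    nlinarith [sq_nonneg (‖u (x', y')‖ - A y - B x'), sq_nonneg (A y - B x'),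
      mul_le_mul tri tri h0 (by linarith)]
  -- integrability helpers
  have intc : ∀ {f : ℝ × ℝ → ℝ}, Continuous f → IntegrableOn f Q volume := fun hf =>
    hf.continuousOn.integrableOn_compact hQc
  have hucont : Continuous u := hu.continuous
  have hmint : IntegrableOn m Q volume := by
    have := aux_int_bdd_mul hQm hQc hmeas hM continuous_const (g := fun _ => (1:ℝ))
    simpa using this
  -- main quantities
  set Ju := ∫ X in Q, ‖u X‖ ^ 2 with hJudef
  set J1 := ∫ X in Q, ‖P1 X‖ ^ 2 with hJ1def
  set J2 := ∫ X in Q, ‖P2 X‖ ^ 2 with hJ2def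
  set Jm := ∫ X in Q, m X * ‖u X‖ ^ 2 with hJmdef
  set T := ∫ X in Q, m X * G X.1 with hTdef
  -- Fubini setup
  set ν : Measure ℝ := volume.restrict (Icc (0:ℝ) 2) with hνdef
  have hprodQ : (volume : Measure (ℝ × ℝ)).restrict Q = ν.prod ν := by
    rw [hQdef, hνdef, Measure.volume_eq_prod, ← Measure.prod_restrict]
  have hνuniv : (ν Set.univ).toReal = 2 := by
    rw [hνdef, Measure.restrict_apply_univ, Real.volume_Icc]
    norm_num
  have hinner1 : ∀ y : ℝ, (∫ x, ‖P1 (x, y)‖ ^ 2 ∂ν) = F y := by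
    intro y
    rw [hνdef, MeasureTheory.integral_Icc_eq_integral_Ioc,
      ← intervalIntegral.integral_of_le (by norm_num : (0:ℝ) ≤ 2)]
  have hinner2 : ∀ x : ℝ, (∫ y, ‖P2 (x, y)‖ ^ 2 ∂ν) = G x := by
    intro x
    rw [hνdef, MeasureTheory.integral_Icc_eq_integral_Ioc,
      ← intervalIntegral.integral_of_le (by norm_num : (0:ℝ) ≤ 2)]
  -- Fubini identities
  have hFub1 : (∫ X in Q, F X.2) = 2 * J1 := by
    have hint : Integrable (fun X : ℝ × ℝ => F X.2) (ν.prod ν) := by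
      rw [← hprodQ]; exact intc (hFcont.comp continuous_snd)
    have h1 : (∫ X in Q, F X.2) = ∫ x, ∫ y, F y ∂ν ∂ν := by
      rw [hprodQ]; exact MeasureTheory.integral_prod _ hint
    have hJ1 : J1 = ∫ y, F y ∂ν := by
      rw [hJ1def, hprodQ, MeasureTheory.integral_prod_symm _
        (by rw [← hprodQ]; exact intc (hc1.norm.pow 2))]
      exact integral_congr_ae (ae_of_all _ fun y => hinner1 y)
    rw [h1, MeasureTheory.integral_const, measureReal_def, hνuniv, hJ1, smul_eq_mul]
  have hFub2 : (∫ X in Q, G X.1) = 2 * J2 := by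
    have h1 : (∫ X in Q, G X.1) = ∫ x, ∫ y, G x ∂ν ∂ν := by
      rw [hprodQ]
      exact MeasureTheory.integral_prod _ (by rw [← hprodQ]; exact intc (hGcont.comp continuous_fst))
    have hJ2 : J2 = ∫ x, G x ∂ν := by
      rw [hJ2def, hprodQ, MeasureTheory.integral_prod _
        (by rw [← hprodQ]; exact intc (hc2.norm.pow 2))]
      exact integral_congr_ae (ae_of_all _ fun x => hinner2 x)
    have h2 : ∀ x : ℝ, (∫ _ : ℝ, G x ∂ν) = 2 * G x := by
      intro x; rw [MeasureTheory.integral_const, measureReal_def, hνuniv, smul_eq_mul]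
    rw [h1, integral_congr_ae (ae_of_all _ h2), MeasureTheory.integral_const_mul, hJ2]
  have hvolQ : ((volume : Measure (ℝ × ℝ)) Q).toReal = 4 := by
    rw [hQdef, Measure.volume_eq_prod, Measure.prod_prod, Real.volume_Icc]
    norm_num [ENNReal.toReal_mul, ENNReal.toReal_ofReal]
  -- bound on T
  have hT : T ≤ M * (2 * J2) := by
    have h1 : T ≤ ∫ X in Q, M * G X.1 := by
      apply integral_mono_ae (aux_int_bdd_mul hQm hQc hmeas hM (hGcont.comp continuous_fst))
        ((intc (hGcont.comp continuous_fst)).const_mul M)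
      exact ae_of_all _ fun X => mul_le_mul_of_nonneg_right (le_of_abs_le (hM X)) (hGnonneg _)
    rw [MeasureTheory.integral_const_mul, hFub2] at h1
    exact h1
  -- Step A
  have stepA : ∀ X ∈ Q, I * ‖u X‖ ^ 2 ≤ 2 * Jm + 8 * F X.2 * I + 8 * T := by
    intro X hX
    have hLHS : I * ‖u X‖ ^ 2 = ∫ X' in Q, m X' * ‖u X‖ ^ 2 := by
      rw [MeasureTheory.integral_mul_const, hIdef]
    have hg2cont : Continuous fun X' : ℝ × ℝ => 2 * ‖u X'‖ ^ 2 + 8 * F X.2 + 8 * G X'.1 :=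
      ((continuous_const.mul (hucont.norm.pow 2)).add continuous_const).add
        (continuous_const.mul (hGcont.comp continuous_fst))
    have hmono : (∫ X' in Q, m X' * ‖u X‖ ^ 2) ≤
        ∫ X' in Q, m X' * (2 * ‖u X'‖ ^ 2 + 8 * F X.2 + 8 * G X'.1) := by
      apply integral_mono_ae (aux_int_bdd_mul hQm hQc hmeas hM continuous_const)
        (aux_int_bdd_mul hQm hQc hmeas hM hg2cont)
      filter_upwards [ae_restrict_mem hQm, ae_restrict_of_ae hnonneg] with X' hX' hm0
      exact mul_le_mul_of_nonneg_left (hptw X hX X' hX') hm0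
    have hexp : (∫ X' in Q, m X' * (2 * ‖u X'‖ ^ 2 + 8 * F X.2 + 8 * G X'.1)) =
        2 * Jm + (8 * F X.2) * I + 8 * T := by
      have e1 : ∀ X' : ℝ × ℝ, m X' * (2 * ‖u X'‖ ^ 2 + 8 * F X.2 + 8 * G X'.1) =
          2 * (m X' * ‖u X'‖ ^ 2) + (8 * F X.2) * m X' + 8 * (m X' * G X'.1) := fun X' => by ring
      have i1 : IntegrableOn
          (fun X' : ℝ × ℝ => 2 * (m X' * ‖u X'‖ ^ 2) + (8 * F X.2) * m X') Q volume :=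
        ((aux_int_bdd_mul hQm hQc hmeas hM (hucont.norm.pow 2)).const_mul 2).add
          (hmint.const_mul _)
      have i2 : IntegrableOn (fun X' : ℝ × ℝ => 8 * (m X' * G X'.1)) Q volume :=
        (aux_int_bdd_mul hQm hQc hmeas hM (hGcont.comp continuous_fst)).const_mul 8
      rw [integral_congr_ae (ae_of_all _ e1), MeasureTheory.integral_add i1 i2,
        MeasureTheory.integral_add ((aux_int_bdd_mul (g := fun X => ‖u X‖ ^ 2) hQm hQc hmeas hM
          (hucont.norm.pow 2)).const_mul 2) (hmint.const_mul _),
        MeasureTheory.integral_const_mul, MeasureTheory.integral_const_mul,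
        MeasureTheory.integral_const_mul]
    calc I * ‖u X‖ ^ 2 = ∫ X' in Q, m X' * ‖u X‖ ^ 2 := hLHS
      _ ≤ ∫ X' in Q, m X' * (2 * ‖u X'‖ ^ 2 + 8 * F X.2 + 8 * G X'.1) := hmono
      _ = 2 * Jm + (8 * F X.2) * I + 8 * T := hexp
      _ = 2 * Jm + 8 * F X.2 * I + 8 * T := by ring
  -- Step B: integrate over X
  have stepB : I * Ju ≤ 8 * Jm + 16 * I * J1 + 32 * T := by
    have hLHS : I * Ju = ∫ X in Q, I * ‖u X‖ ^ 2 := by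
      rw [MeasureTheory.integral_const_mul]
    have hRHSint : IntegrableOn (fun X : ℝ × ℝ => 2 * Jm + 8 * F X.2 * I + 8 * T) Q volume := by
      have c1 : IntegrableOn (fun _ : ℝ × ℝ => 2 * Jm) Q volume :=
        integrableOn_const hQc.measure_lt_top.ne
      have c2 : IntegrableOn (fun X : ℝ × ℝ => 8 * F X.2 * I) Q volume :=
        ((intc (hFcont.comp continuous_snd)).const_mul 8).mul_const I
      have c3 : IntegrableOn (fun _ : ℝ × ℝ => 8 * T) Q volume :=
        integrableOn_const hQc.measure_lt_top.ne
      exact (c1.add c2).add c3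
    have hmono : (∫ X in Q, I * ‖u X‖ ^ 2) ≤ ∫ X in Q, (2 * Jm + 8 * F X.2 * I + 8 * T) :=
      setIntegral_mono_on ((intc (hucont.norm.pow 2)).const_mul I) hRHSint hQm stepA
    have hexp : (∫ X in Q, (2 * Jm + 8 * F X.2 * I + 8 * T)) =
        4 * (2 * Jm + 8 * T) + 8 * I * (2 * J1) := by
      have e1 : ∀ X : ℝ × ℝ, 2 * Jm + 8 * F X.2 * I + 8 * T =
          (2 * Jm + 8 * T) + (8 * I) * F X.2 := fun X => by ring
      have ia : IntegrableOn (fun _ : ℝ × ℝ => 2 * Jm + 8 * T) Q volume :=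
        integrableOn_const hQc.measure_lt_top.ne
      have ib : IntegrableOn (fun X : ℝ × ℝ => (8 * I) * F X.2) Q volume :=
        (intc (hFcont.comp continuous_snd)).const_mul (8 * I)
      rw [integral_congr_ae (ae_of_all _ e1), MeasureTheory.integral_add ia ib,
        MeasureTheory.integral_const_mul, hFub1, MeasureTheory.setIntegral_const, measureReal_def, hvolQ,
        smul_eq_mul]
    calc I * Ju = ∫ X in Q, I * ‖u X‖ ^ 2 := hLHS
      _ ≤ ∫ X in Q, (2 * Jm + 8 * F X.2 * I + 8 * T) := hmono
      _ = 4 * (2 * Jm + 8 * T) + 8 * I * (2 * J1) := hexp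
      _ = 8 * Jm + 16 * I * J1 + 32 * T := by ring
  -- nonnegativity
  have hJ1nn : 0 ≤ J1 := setIntegral_nonneg hQm fun X _ => sq_nonneg _
  have hJ2nn : 0 ≤ J2 := setIntegral_nonneg hQm fun X _ => sq_nonneg _
  have hJmnn : 0 ≤ Jm := by
    apply MeasureTheory.integral_nonneg_of_ae
    filter_upwards [ae_restrict_of_ae hnonneg] with X h0
    exact mul_nonneg h0 (sq_nonneg _)
  -- rewrite the derivative integral
  have hJD : (∫ X in Q, (‖deriv (fun t => u (t, X.2)) X.1‖ ^ 2 +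
      ‖deriv (fun t => u (X.1, t)) X.2‖ ^ 2)) = J1 + J2 := by
    have e : ∀ X : ℝ × ℝ, ‖deriv (fun t => u (t, X.2)) X.1‖ ^ 2 +
        ‖deriv (fun t => u (X.1, t)) X.2‖ ^ 2 = ‖P1 X‖ ^ 2 + ‖P2 X‖ ^ 2 := by
      intro X
      rw [hder1 X.1 X.2, hder2 X.1 X.2]
    rw [integral_congr_ae (ae_of_all _ e),
      MeasureTheory.integral_add (intc (f := fun X => ‖P1 X‖ ^ 2) (hc1.norm.pow 2))
        (intc (f := fun X => ‖P2 X‖ ^ 2) (hc2.norm.pow 2))]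
  rw [hJD]
  have key : I * Ju ≤ 8 * Jm + 16 * I * J1 + 64 * M * J2 := by
    calc I * Ju ≤ 8 * Jm + 16 * I * J1 + 32 * T := stepB
      _ ≤ 8 * Jm + 16 * I * J1 + 32 * (M * (2 * J2)) := by linarith [hT]
      _ = 8 * Jm + 16 * I * J1 + 64 * M * J2 := by ring
  rw [div_mul_eq_mul_div, le_div_iff₀ hI]
  nlinarith [key, mul_nonneg (mul_nonneg hM0 hJ1nn) hI.le]
end
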